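/- arXiv:2001.00639 — 10 statements merged into one kernel-verified Lean document; each statement's English description precedes it below -/
import Mathlib

section
/- Let M ⊆ V, u ∈ V, and δ ∈ (0,1). Let u_M ∈ M satisfy ‖u − u_M‖ ≤ ‖u − v‖ for all v ∈ M, fix sample points y_1,…,y_n ∈ Y, and let u_{M,n} ∈ M satisfy ‖u − u_{M,n}‖_n ≤ ‖u − v‖_n for all v ∈ M. Assume RIP({u_M} − M, δ) holds, where {u_M} − M := {u_M − v : v ∈ M}, and assume ‖u − u_M‖_n ≤ ‖u − u_M‖_{w,∞}. Then ‖u_M − u_{M,n}‖ ≤ (2/√(1−δ)) ‖u − u_M‖_{w,∞}. -/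
open MeasureTheory ENNReal

open Finset in
lemma mink_sqrt_sum {ι : Type*} (s : Finset ι) (a b : ι → ℝ) :
    Real.sqrt (∑ i ∈ s, (a i + b i) ^ 2) ≤
      Real.sqrt (∑ i ∈ s, a i ^ 2) + Real.sqrt (∑ i ∈ s, b i ^ 2) := by
  have hA : (0:ℝ) ≤ ∑ i ∈ s, a i ^ 2 := sum_nonneg fun i _ => sq_nonneg _
  have hB : (0:ℝ) ≤ ∑ i ∈ s, b i ^ 2 := sum_nonneg fun i _ => sq_nonneg _
  rw [show Real.sqrt (∑ i ∈ s, a i ^ 2) + Real.sqrt (∑ i ∈ s, b i ^ 2)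
      = Real.sqrt ((Real.sqrt (∑ i ∈ s, a i ^ 2) + Real.sqrt (∑ i ∈ s, b i ^ 2))^2) by
    rw [Real.sqrt_sq (by positivity)]]
  apply Real.sqrt_le_sqrt
  have hcs := Real.sum_mul_le_sqrt_mul_sqrt s a b
  calc ∑ i ∈ s, (a i + b i) ^ 2
      = (∑ i ∈ s, a i ^ 2) + 2 * (∑ i ∈ s, a i * b i) + (∑ i ∈ s, b i ^ 2) := by
        simp_rw [add_sq, sum_add_distrib, mul_sum]; ring
    _ ≤ (∑ i ∈ s, a i ^ 2) + 2 * (Real.sqrt (∑ i ∈ s, a i ^ 2) * Real.sqrt (∑ i ∈ s, b i ^ 2))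
          + (∑ i ∈ s, b i ^ 2) := by gcongr
    _ = _ := by rw [add_sq, Real.sq_sqrt hA, Real.sq_sqrt hB]; ring

/-- (Empirical projection error, first bound of Theorem 3.9.)
If RIP({u_M} − M, δ) holds and `‖u − u_M‖ₙ ≤ ‖u − u_M‖_{w,∞}`, then
`‖u_M − u_{M,n}‖ ≤ (2/√(1−δ)) ‖u − u_M‖_{w,∞}`. -/
theorem empirical_projection_error_winf
    {Y : Type*} [MeasurableSpace Y] (ρ : Measure Y) [IsProbabilityMeasure ρ]
    {V : Type*} [AddCommGroup V] [Module ℝ V]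
    -- the family of seminorms
    (nrm : Y → V → ℝ)
    (hnrm_nonneg : ∀ y v, 0 ≤ nrm y v)
    (hnrm_smul : ∀ (y : Y) (a : ℝ) (v : V), nrm y (a • v) = |a| * nrm y v)
    (hnrm_add : ∀ (y : Y) (u v : V), nrm y (u + v) ≤ nrm y u + nrm y v)
    (hnrm_meas : ∀ v, Measurable fun y => nrm y v)
    (hnrm_int : ∀ v, Integrable (fun y => nrm y v ^ 2) ρ)
    -- the norm ‖·‖
    (Nrm : V → ℝ) (hNrm : ∀ v, Nrm v = Real.sqrt (∫ y, nrm y v ^ 2 ∂ρ))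
    (hNrm_norm : ∀ v, Nrm v = 0 → v = 0)
    -- the weight function
    (w : Y → ℝ) (hw_meas : Measurable w) (hw_pos : ∀ y, 0 < w y)
    (hw_int : ∫ y, (w y)⁻¹ ∂ρ = 1)
    -- the samples and the empirical seminorm
    (n : ℕ) (hn : 0 < n) (ys : Fin n → Y)
    (empn : V → ℝ)
    (hempn : ∀ v, empn v = Real.sqrt ((n : ℝ)⁻¹ * ∑ i, w (ys i) * nrm (ys i) v ^ 2))
    -- the (w,∞)-norm
    (Wnorm : V → ℝ)
    (hWnorm : ∀ v, Wnorm v = Real.sqrt (essSup (fun y => w y * nrm y v ^ 2) ρ))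
    -- the model class, the target and the (empirical) best approximations
    (M : Set V) (u : V) (δ : ℝ) (hδ0 : 0 < δ) (hδ1 : δ < 1)
    (uM : V) (huM : uM ∈ M) (huM_best : ∀ v ∈ M, Nrm (u - uM) ≤ Nrm (u - v))
    (uMn : V) (huMn : uMn ∈ M) (huMn_best : ∀ v ∈ M, empn (u - uMn) ≤ empn (u - v))
    -- RIP({u_M} − M, δ)
    (hRIP : ∀ v ∈ M,
      (1 - δ) * Nrm (uM - v) ^ 2 ≤ empn (uM - v) ^ 2 ∧
      empn (uM - v) ^ 2 ≤ (1 + δ) * Nrm (uM - v) ^ 2)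
    -- ‖u − u_M‖ₙ ≤ ‖u − u_M‖_{w,∞} (holds for almost every sample tuple)
    (hbound : empn (u - uM) ≤ Wnorm (u - uM)) :
    Nrm (uM - uMn) ≤ 2 / Real.sqrt (1 - δ) * Wnorm (u - uM) := by
  have hd : (0:ℝ) < 1 - δ := by linarith
  have hsd : (0:ℝ) < Real.sqrt (1 - δ) := Real.sqrt_pos.2 hd
  have hempn_nonneg : ∀ v, 0 ≤ empn v := fun v => by rw [hempn]; exact Real.sqrt_nonneg _
  have hnrm_neg : ∀ y v, nrm y (-v) = nrm y v := by
    intro y v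
    have := hnrm_smul y (-1) v
    simpa using this
  have hempn_neg : ∀ v, empn (-v) = empn v := by
    intro v
    rw [hempn, hempn]
    simp_rw [hnrm_neg]
  -- triangle inequality for empn
  have htri : ∀ v₁ v₂ : V, empn (v₁ + v₂) ≤ empn v₁ + empn v₂ := by
    intro v₁ v₂
    set c : Fin n → ℝ := fun i => Real.sqrt ((n : ℝ)⁻¹ * w (ys i)) with hc
    have hc2 : ∀ i, c i ^ 2 = (n : ℝ)⁻¹ * w (ys i) := fun i =>
      Real.sq_sqrt (mul_nonneg (by positivity) (hw_pos _).le)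
    have hcn : ∀ i, 0 ≤ c i := fun i => Real.sqrt_nonneg _
    have key : ∀ v : V, empn v = Real.sqrt (∑ i, (c i * nrm (ys i) v) ^ 2) := by
      intro v
      rw [hempn, Finset.mul_sum]
      congr 1
      apply Finset.sum_congr rfl
      intro i _
      rw [mul_pow, hc2]
      ring
    rw [key, key, key]
    calc Real.sqrt (∑ i, (c i * nrm (ys i) (v₁ + v₂)) ^ 2)
        ≤ Real.sqrt (∑ i, (c i * nrm (ys i) v₁ + c i * nrm (ys i) v₂) ^ 2) := by
          apply Real.sqrt_le_sqrt
          apply Finset.sum_le_sum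
          intro i _
          have h1 : 0 ≤ c i * nrm (ys i) (v₁ + v₂) :=
            mul_nonneg (hcn i) (hnrm_nonneg _ _)
          have h2 : c i * nrm (ys i) (v₁ + v₂) ≤
              c i * nrm (ys i) v₁ + c i * nrm (ys i) v₂ := by
            rw [← mul_add]
            exact mul_le_mul_of_nonneg_left (hnrm_add _ _ _) (hcn i)
          exact pow_le_pow_left₀ h1 h2 2
      _ ≤ _ := mink_sqrt_sum _ _ _
  -- step 1 : √(1-δ) ‖uM - uMn‖ ≤ ‖uM - uMn‖ₙ
  have hNrm_nonneg : 0 ≤ Nrm (uM - uMn) := by rw [hNrm]; exact Real.sqrt_nonneg _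
  have h1 : Real.sqrt (1 - δ) * Nrm (uM - uMn) ≤ empn (uM - uMn) := by
    have hsq : (Real.sqrt (1 - δ) * Nrm (uM - uMn)) ^ 2 ≤ empn (uM - uMn) ^ 2 := by
      rw [mul_pow, Real.sq_sqrt hd.le]
      exact (hRIP uMn huMn).1
    have := Real.sqrt_le_sqrt hsq
    rwa [Real.sqrt_sq (by positivity), Real.sqrt_sq (hempn_nonneg _)] at this
  -- step 2 : ‖uM - uMn‖ₙ ≤ 2 ‖u - uM‖_{w,∞}
  have h2 : empn (uM - uMn) ≤ 2 * Wnorm (u - uM) := by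
    have heq : uM - uMn = (uM - u) + (u - uMn) := by abel
    calc empn (uM - uMn) = empn ((uM - u) + (u - uMn)) := by rw [heq]
      _ ≤ empn (uM - u) + empn (u - uMn) := htri _ _
      _ = empn (u - uM) + empn (u - uMn) := by
          rw [show uM - u = -(u - uM) by abel, hempn_neg]
      _ ≤ empn (u - uM) + empn (u - uM) := by
          have := huMn_best uM huM
          linarith
      _ ≤ 2 * Wnorm (u - uM) := by linarith
  -- combine
  rw [div_mul_eq_mul_div, le_div_iff₀ hsd, mul_comm]
  calc Real.sqrt (1 - δ) * Nrm (uM - uMn) ≤ empn (uM - uMn) := h1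
    _ ≤ 2 * Wnorm (u - uM) := h2
end

section
/- Let M ⊆ V, u ∈ V, and δ ∈ (0,1). Let u_M ∈ M satisfy ‖u − u_M‖ ≤ ‖u − v‖ for all v ∈ M, fix sample points y_1,…,y_n ∈ Y, and let u_{M,n} ∈ M satisfy ‖u − u_{M,n}‖_n ≤ ‖u − v‖_n for all v ∈ M. Assume both RIP({u_M} − M, δ) and RIP({u − u_M}, δ) hold, where {u_M} − M := {u_M − v : v ∈ M}. Then ‖u_M − u_{M,n}‖ ≤ 2√((1+δ)/(1−δ)) ‖u − u_M‖, and consequently ‖u − u_M‖ ≤ ‖u − u_{M,n}‖ ≤ (1 + 2√((1+δ)/(1−δ))) ‖u − u_M‖. -/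
open MeasureTheory ENNReal

/-- Cauchy–Schwarz-type triangle inequality for finite ℓ² sums. -/
lemma l2_fin_triangle {n : ℕ} (F G : Fin n → ℝ) (hF : ∀ i, 0 ≤ F i) (hG : ∀ i, 0 ≤ G i) :
    Real.sqrt (∑ i, (F i + G i) ^ 2) ≤
      Real.sqrt (∑ i, F i ^ 2) + Real.sqrt (∑ i, G i ^ 2) := by
  set A := Real.sqrt (∑ i, F i ^ 2) with hA
  set B := Real.sqrt (∑ i, G i ^ 2) with hB
  have hA0 : 0 ≤ A := Real.sqrt_nonneg _
  have hB0 : 0 ≤ B := Real.sqrt_nonneg _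
  have hA2 : A ^ 2 = ∑ i, F i ^ 2 :=
    Real.sq_sqrt (Finset.sum_nonneg fun i _ => sq_nonneg _)
  have hB2 : B ^ 2 = ∑ i, G i ^ 2 :=
    Real.sq_sqrt (Finset.sum_nonneg fun i _ => sq_nonneg _)
  have hCS : ∑ i, F i * G i ≤ A * B := by
    have h := Finset.sum_mul_sq_le_sq_mul_sq Finset.univ F G
    have h0 : 0 ≤ ∑ i, F i * G i :=
      Finset.sum_nonneg fun i _ => mul_nonneg (hF i) (hG i)
    calc ∑ i, F i * G i = Real.sqrt ((∑ i, F i * G i) ^ 2) := (Real.sqrt_sq h0).symm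
      _ ≤ Real.sqrt ((∑ i, F i ^ 2) * ∑ i, G i ^ 2) := Real.sqrt_le_sqrt h
      _ = A * B := by
          rw [Real.sqrt_mul (Finset.sum_nonneg fun i _ => sq_nonneg _)]
  have key : ∑ i, (F i + G i) ^ 2 ≤ (A + B) ^ 2 := by
    have expand : ∑ i, (F i + G i) ^ 2
        = (∑ i, F i ^ 2) + (2 * (∑ i, F i * G i) + ∑ i, G i ^ 2) := by
      rw [Finset.mul_sum, ← Finset.sum_add_distrib, ← Finset.sum_add_distrib]
      exact Finset.sum_congr rfl fun i _ => by ring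
    rw [expand]
    nlinarith [hCS]
  calc Real.sqrt (∑ i, (F i + G i) ^ 2) ≤ Real.sqrt ((A + B) ^ 2) := Real.sqrt_le_sqrt key
    _ = A + B := Real.sqrt_sq (by positivity)

/-- Minkowski inequality for L² integrals of nonnegative functions. -/
lemma l2_int_triangle {Y : Type*} [MeasurableSpace Y] (μ : Measure Y) (f g : Y → ℝ)
    (hf0 : ∀ y, 0 ≤ f y) (hg0 : ∀ y, 0 ≤ g y)
    (hfm : Measurable f) (hgm : Measurable g)
    (hf : Integrable (fun y => f y ^ 2) μ) (hg : Integrable (fun y => g y ^ 2) μ) :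
    Real.sqrt (∫ y, (f y + g y) ^ 2 ∂μ) ≤
      Real.sqrt (∫ y, f y ^ 2 ∂μ) + Real.sqrt (∫ y, g y ^ 2 ∂μ) := by
  set A := Real.sqrt (∫ y, f y ^ 2 ∂μ) with hA
  set B := Real.sqrt (∫ y, g y ^ 2 ∂μ) with hB
  have hA0 : 0 ≤ A := Real.sqrt_nonneg _
  have hB0 : 0 ≤ B := Real.sqrt_nonneg _
  have hintA : 0 ≤ ∫ y, f y ^ 2 ∂μ := integral_nonneg fun y => sq_nonneg _
  have hintB : 0 ≤ ∫ y, g y ^ 2 ∂μ := integral_nonneg fun y => sq_nonneg _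
  have hA2 : A ^ 2 = ∫ y, f y ^ 2 ∂μ := Real.sq_sqrt hintA
  have hB2 : B ^ 2 = ∫ y, g y ^ 2 ∂μ := Real.sq_sqrt hintB
  have hfL2 : MemLp f 2 μ :=
    (memLp_two_iff_integrable_sq hfm.aestronglyMeasurable).mpr hf
  have hgL2 : MemLp g 2 μ :=
    (memLp_two_iff_integrable_sq hgm.aestronglyMeasurable).mpr hg
  have hfg_int : Integrable (fun y => f y * g y) μ := by
    refine Integrable.mono' (hf.add hg) ((hfm.mul hgm).aestronglyMeasurable) ?_
    filter_upwards with y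
    have : f y * g y ≤ f y ^ 2 + g y ^ 2 := by nlinarith [hf0 y, hg0 y, sq_nonneg (f y - g y)]
    rw [Real.norm_eq_abs, abs_of_nonneg (mul_nonneg (hf0 y) (hg0 y))]
    exact this
  have hCS : ∫ y, f y * g y ∂μ ≤ A * B := by
    have hconj : Real.HolderConjugate 2 2 := by
      constructor <;> norm_num
    have hfL2' : MemLp f (ENNReal.ofReal 2) μ := by
      convert hfL2; simp [ENNReal.ofReal_ofNat]
    have hgL2' : MemLp g (ENNReal.ofReal 2) μ := by
      convert hgL2; simp [ENNReal.ofReal_ofNat]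
    have h := integral_mul_le_Lp_mul_Lq_of_nonneg hconj
      (Filter.Eventually.of_forall hf0) (Filter.Eventually.of_forall hg0) hfL2' hgL2'
    have e1 : ∫ y, f y ^ (2 : ℝ) ∂μ = ∫ y, f y ^ 2 ∂μ := by
      refine integral_congr_ae (Filter.Eventually.of_forall fun y => ?_)
      show f y ^ (2 : ℝ) = f y ^ 2
      rw [show (2 : ℝ) = ((2 : ℕ) : ℝ) by norm_num, Real.rpow_natCast]
    have e2 : ∫ y, g y ^ (2 : ℝ) ∂μ = ∫ y, g y ^ 2 ∂μ := by
      refine integral_congr_ae (Filter.Eventually.of_forall fun y => ?_)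
      show g y ^ (2 : ℝ) = g y ^ 2
      rw [show (2 : ℝ) = ((2 : ℕ) : ℝ) by norm_num, Real.rpow_natCast]
    rw [e1, e2] at h
    calc ∫ y, f y * g y ∂μ ≤ (∫ y, f y ^ 2 ∂μ) ^ (1 / 2 : ℝ) * (∫ y, g y ^ 2 ∂μ) ^ (1 / 2 : ℝ) := h
      _ = A * B := by rw [hA, hB, Real.sqrt_eq_rpow, Real.sqrt_eq_rpow]
  have hsum_int : Integrable (fun y => (f y + g y) ^ 2) μ := by
    have : (fun y => (f y + g y) ^ 2) =
        fun y => f y ^ 2 + (2 * (f y * g y) + g y ^ 2) := by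
      funext y; ring
    rw [this]
    exact hf.add ((hfg_int.const_mul 2).add hg)
  have key : ∫ y, (f y + g y) ^ 2 ∂μ ≤ (A + B) ^ 2 := by
    have expand : ∫ y, (f y + g y) ^ 2 ∂μ =
        (∫ y, f y ^ 2 ∂μ) + (2 * (∫ y, f y * g y ∂μ) + ∫ y, g y ^ 2 ∂μ) := by
      have h1 : ∫ y, (f y + g y) ^ 2 ∂μ
          = ∫ y, (f y ^ 2 + (2 * (f y * g y) + g y ^ 2)) ∂μ :=
        integral_congr_ae (Filter.Eventually.of_forall fun y => by ring)
      have hi1 : Integrable (fun y => 2 * (f y * g y)) μ := hfg_int.const_mul 2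
      have hi2 : Integrable (fun y => 2 * (f y * g y) + g y ^ 2) μ := hi1.add hg
      rw [h1, integral_add hf hi2, integral_add hi1 hg, MeasureTheory.integral_const_mul]
    rw [expand]
    nlinarith [hCS]
  calc Real.sqrt (∫ y, (f y + g y) ^ 2 ∂μ) ≤ Real.sqrt ((A + B) ^ 2) := Real.sqrt_le_sqrt key
    _ = A + B := Real.sqrt_sq (by positivity)

/-- (Empirical projection error, Theorem 3.9.) If RIP({u_M} − M, δ)
and RIP({u − u_M}, δ) hold, then `‖u_M − u_{M,n}‖ ≤ 2√((1+δ)/(1−δ)) ‖u − u_M‖` and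
consequently `‖u − u_M‖ ≤ ‖u − u_{M,n}‖ ≤ (1 + 2√((1+δ)/(1−δ))) ‖u − u_M‖`. -/
theorem empirical_projection_error
    {Y : Type*} [MeasurableSpace Y] (ρ : Measure Y) [IsProbabilityMeasure ρ]
    {V : Type*} [AddCommGroup V] [Module ℝ V]
    -- the family of seminorms
    (nrm : Y → V → ℝ)
    (hnrm_nonneg : ∀ y v, 0 ≤ nrm y v)
    (hnrm_smul : ∀ (y : Y) (a : ℝ) (v : V), nrm y (a • v) = |a| * nrm y v)
    (hnrm_add : ∀ (y : Y) (u v : V), nrm y (u + v) ≤ nrm y u + nrm y v)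
    (hnrm_meas : ∀ v, Measurable fun y => nrm y v)
    (hnrm_int : ∀ v, Integrable (fun y => nrm y v ^ 2) ρ)
    -- the norm ‖·‖
    (Nrm : V → ℝ) (hNrm : ∀ v, Nrm v = Real.sqrt (∫ y, nrm y v ^ 2 ∂ρ))
    (hNrm_norm : ∀ v, Nrm v = 0 → v = 0)
    -- the weight function
    (w : Y → ℝ) (hw_meas : Measurable w) (hw_pos : ∀ y, 0 < w y)
    (hw_int : ∫ y, (w y)⁻¹ ∂ρ = 1)
    -- the samples and the empirical seminorm
    (n : ℕ) (hn : 0 < n) (ys : Fin n → Y)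
    (empn : V → ℝ)
    (hempn : ∀ v, empn v = Real.sqrt ((n : ℝ)⁻¹ * ∑ i, w (ys i) * nrm (ys i) v ^ 2))
    -- the model class, the target and the (empirical) best approximations
    (M : Set V) (u : V) (δ : ℝ) (hδ0 : 0 < δ) (hδ1 : δ < 1)
    (uM : V) (huM : uM ∈ M) (huM_best : ∀ v ∈ M, Nrm (u - uM) ≤ Nrm (u - v))
    (uMn : V) (huMn : uMn ∈ M) (huMn_best : ∀ v ∈ M, empn (u - uMn) ≤ empn (u - v))
    -- RIP({u_M} − M, δ)
    (hRIP : ∀ v ∈ M,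
      (1 - δ) * Nrm (uM - v) ^ 2 ≤ empn (uM - v) ^ 2 ∧
      empn (uM - v) ^ 2 ≤ (1 + δ) * Nrm (uM - v) ^ 2)
    -- RIP({u − u_M}, δ)
    (hRIP2 : (1 - δ) * Nrm (u - uM) ^ 2 ≤ empn (u - uM) ^ 2 ∧
      empn (u - uM) ^ 2 ≤ (1 + δ) * Nrm (u - uM) ^ 2) :
    Nrm (uM - uMn) ≤ 2 * Real.sqrt ((1 + δ) / (1 - δ)) * Nrm (u - uM) ∧
    Nrm (u - uM) ≤ Nrm (u - uMn) ∧
    Nrm (u - uMn) ≤ (1 + 2 * Real.sqrt ((1 + δ) / (1 - δ))) * Nrm (u - uM) := by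
  have h1δ : 0 < 1 - δ := by linarith
  have h1δ' : 0 < 1 + δ := by linarith
  -- basic facts
  have hnrm_neg : ∀ (y : Y) (v : V), nrm y (-v) = nrm y v := by
    intro y v
    have := hnrm_smul y (-1) v
    simpa using this
  have hNrm_nonneg : ∀ v, 0 ≤ Nrm v := fun v => (hNrm v) ▸ Real.sqrt_nonneg _
  have hempn_nonneg : ∀ v, 0 ≤ empn v := fun v => (hempn v) ▸ Real.sqrt_nonneg _
  have hempn_neg : ∀ v, empn (-v) = empn v := by
    intro v; rw [hempn, hempn]
    congr 2
    exact Finset.sum_congr rfl fun i _ => by rw [hnrm_neg]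
  -- triangle inequality for empn
  have hempn_tri : ∀ a b : V, empn (a + b) ≤ empn a + empn b := by
    intro a b
    rw [hempn, hempn, hempn]
    set F : Fin n → ℝ := fun i => Real.sqrt (w (ys i)) * nrm (ys i) a with hF
    set G : Fin n → ℝ := fun i => Real.sqrt (w (ys i)) * nrm (ys i) b with hG
    have hFsq : ∀ i, F i ^ 2 = w (ys i) * nrm (ys i) a ^ 2 := by
      intro i; rw [hF]; simp only
      rw [mul_pow, Real.sq_sqrt (hw_pos _).le]
    have hGsq : ∀ i, G i ^ 2 = w (ys i) * nrm (ys i) b ^ 2 := by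
      intro i; rw [hG]; simp only
      rw [mul_pow, Real.sq_sqrt (hw_pos _).le]
    have hstep : ∑ i, w (ys i) * nrm (ys i) (a + b) ^ 2 ≤ ∑ i, (F i + G i) ^ 2 := by
      refine Finset.sum_le_sum fun i _ => ?_
      have h1 : nrm (ys i) (a + b) ≤ nrm (ys i) a + nrm (ys i) b := hnrm_add _ _ _
      have h2 : w (ys i) * nrm (ys i) (a + b) ^ 2 ≤
          w (ys i) * (nrm (ys i) a + nrm (ys i) b) ^ 2 := by
        refine mul_le_mul_of_nonneg_left ?_ (hw_pos _).le
        exact pow_le_pow_left₀ (hnrm_nonneg _ _) h1 2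
      calc w (ys i) * nrm (ys i) (a + b) ^ 2 ≤
            w (ys i) * (nrm (ys i) a + nrm (ys i) b) ^ 2 := h2
        _ = (F i + G i) ^ 2 := by
            rw [hF, hG]; simp only [← mul_add]
            rw [mul_pow, Real.sq_sqrt (hw_pos _).le]
    have hninv : (0 : ℝ) ≤ (n : ℝ)⁻¹ := by positivity
    have tri := l2_fin_triangle F G
      (fun i => mul_nonneg (Real.sqrt_nonneg _) (hnrm_nonneg _ _))
      (fun i => mul_nonneg (Real.sqrt_nonneg _) (hnrm_nonneg _ _))
    calc Real.sqrt ((n : ℝ)⁻¹ * ∑ i, w (ys i) * nrm (ys i) (a + b) ^ 2)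
        ≤ Real.sqrt ((n : ℝ)⁻¹ * ∑ i, (F i + G i) ^ 2) := by
          exact Real.sqrt_le_sqrt (mul_le_mul_of_nonneg_left hstep hninv)
      _ = Real.sqrt ((n : ℝ)⁻¹) * Real.sqrt (∑ i, (F i + G i) ^ 2) := Real.sqrt_mul hninv _
      _ ≤ Real.sqrt ((n : ℝ)⁻¹) *
          (Real.sqrt (∑ i, F i ^ 2) + Real.sqrt (∑ i, G i ^ 2)) := by
          exact mul_le_mul_of_nonneg_left tri (Real.sqrt_nonneg _)
      _ = Real.sqrt ((n : ℝ)⁻¹ * ∑ i, w (ys i) * nrm (ys i) a ^ 2) +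
          Real.sqrt ((n : ℝ)⁻¹ * ∑ i, w (ys i) * nrm (ys i) b ^ 2) := by
          have eF : ∑ i, F i ^ 2 = ∑ i, w (ys i) * nrm (ys i) a ^ 2 :=
            Finset.sum_congr rfl fun i _ => hFsq i
          have eG : ∑ i, G i ^ 2 = ∑ i, w (ys i) * nrm (ys i) b ^ 2 :=
            Finset.sum_congr rfl fun i _ => hGsq i
          rw [mul_add, ← Real.sqrt_mul hninv, ← Real.sqrt_mul hninv, eF, eG]
  -- triangle inequality for Nrm
  have hNrm_tri : ∀ a b : V, Nrm (a + b) ≤ Nrm a + Nrm b := by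
    intro a b
    rw [hNrm, hNrm, hNrm]
    have tri := l2_int_triangle ρ (fun y => nrm y a) (fun y => nrm y b)
      (fun y => hnrm_nonneg y a) (fun y => hnrm_nonneg y b)
      (hnrm_meas a) (hnrm_meas b) (hnrm_int a) (hnrm_int b)
    refine le_trans ?_ tri
    refine Real.sqrt_le_sqrt ?_
    refine integral_mono_of_nonneg (Filter.Eventually.of_forall fun y => sq_nonneg _) ?_ ?_
    · have : (fun y => (nrm y a + nrm y b) ^ 2) =
          fun y => nrm y a ^ 2 + (2 * (nrm y a * nrm y b) + nrm y b ^ 2) := by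
        funext y; ring
      rw [this]
      refine (hnrm_int a).add (Integrable.add ?_ (hnrm_int b))
      refine Integrable.const_mul ?_ 2
      refine Integrable.mono' ((hnrm_int a).add (hnrm_int b))
        (((hnrm_meas a).mul (hnrm_meas b)).aestronglyMeasurable) ?_
      filter_upwards with y
      rw [Real.norm_eq_abs, abs_of_nonneg (mul_nonneg (hnrm_nonneg y a) (hnrm_nonneg y b))]
      simp only [Pi.add_apply]
      nlinarith [hnrm_nonneg y a, hnrm_nonneg y b, sq_nonneg (nrm y a - nrm y b)]
    · filter_upwards with y
      exact pow_le_pow_left₀ (hnrm_nonneg _ _) (hnrm_add y a b) 2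
  -- main chain of inequalities
  set C := Real.sqrt ((1 + δ) / (1 - δ)) with hC
  have hC0 : 0 ≤ C := Real.sqrt_nonneg _
  -- step: empn (u - uM) ≤ √(1+δ) * Nrm (u - uM)
  have step4 : empn (u - uM) ≤ Real.sqrt (1 + δ) * Nrm (u - uM) := by
    have h := hRIP2.2
    have : empn (u - uM) = Real.sqrt (empn (u - uM) ^ 2) :=
      (Real.sqrt_sq (hempn_nonneg _)).symm
    rw [this]
    calc Real.sqrt (empn (u - uM) ^ 2) ≤ Real.sqrt ((1 + δ) * Nrm (u - uM) ^ 2) :=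
          Real.sqrt_le_sqrt h
      _ = Real.sqrt (1 + δ) * Nrm (u - uM) := by
          rw [Real.sqrt_mul h1δ'.le, Real.sqrt_sq (hNrm_nonneg _)]
  -- step: empn (uM - uMn) ≤ 2 * empn (u - uM)
  have step23 : empn (uM - uMn) ≤ 2 * empn (u - uM) := by
    have h1 : empn (uM - uMn) ≤ empn (uM - u) + empn (u - uMn) := by
      have : uM - uMn = (uM - u) + (u - uMn) := by abel
      rw [this]; exact hempn_tri _ _
    have h2 : empn (uM - u) = empn (u - uM) := by
      rw [← hempn_neg (u - uM)]; congr 1; abel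
    have h3 : empn (u - uMn) ≤ empn (u - uM) := huMn_best uM huM
    linarith
  -- step 1: (1-δ) Nrm(uM - uMn)² ≤ empn(uM - uMn)²
  have step1 : (1 - δ) * Nrm (uM - uMn) ^ 2 ≤ empn (uM - uMn) ^ 2 := (hRIP uMn huMn).1
  -- combine
  have main : Nrm (uM - uMn) ≤ 2 * C * Nrm (u - uM) := by
    have hsq : (1 - δ) * Nrm (uM - uMn) ^ 2 ≤ 4 * (1 + δ) * Nrm (u - uM) ^ 2 := by
      have h1 : empn (uM - uMn) ^ 2 ≤ (2 * empn (u - uM)) ^ 2 :=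
        pow_le_pow_left₀ (hempn_nonneg _) step23 2
      have h2 : empn (u - uM) ^ 2 ≤ (1 + δ) * Nrm (u - uM) ^ 2 := hRIP2.2
      nlinarith [hempn_nonneg (u - uM)]
    have hsq' : Nrm (uM - uMn) ^ 2 ≤ (2 * C * Nrm (u - uM)) ^ 2 := by
      have hC2 : C ^ 2 = (1 + δ) / (1 - δ) := Real.sq_sqrt (by positivity)
      have expand : (2 * C * Nrm (u - uM)) ^ 2 = 4 * ((1 + δ) / (1 - δ)) * Nrm (u - uM) ^ 2 := by
        rw [mul_pow, mul_pow, hC2]; ring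
      have h4 : 4 * ((1 + δ) / (1 - δ)) * Nrm (u - uM) ^ 2
          = (4 * (1 + δ) * Nrm (u - uM) ^ 2) / (1 - δ) := by
        field_simp
      rw [expand, h4, le_div_iff₀ h1δ]
      nlinarith [hsq]
    calc Nrm (uM - uMn) = Real.sqrt (Nrm (uM - uMn) ^ 2) :=
          (Real.sqrt_sq (hNrm_nonneg _)).symm
      _ ≤ Real.sqrt ((2 * C * Nrm (u - uM)) ^ 2) := Real.sqrt_le_sqrt hsq'
      _ = 2 * C * Nrm (u - uM) :=
          Real.sqrt_sq (mul_nonneg (by positivity) (hNrm_nonneg _))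
  refine ⟨main, huM_best uMn huMn, ?_⟩
  have htri : Nrm (u - uMn) ≤ Nrm (u - uM) + Nrm (uM - uMn) := by
    have : u - uMn = (u - uM) + (uM - uMn) := by abel
    rw [this]; exact hNrm_tri _ _
  calc Nrm (u - uMn) ≤ Nrm (u - uM) + Nrm (uM - uMn) := htri
    _ ≤ Nrm (u - uM) + 2 * C * Nrm (u - uM) := by linarith
    _ = (1 + 2 * C) * Nrm (u - uM) := by ring
end

section
/- Let M ⊆ V, u ∈ V, δ ∈ (0,1), ε > 0, and let η : Y → ℝ be measurable. Fix sample points y_1,…,y_n ∈ Y with w(y_i) η(y_i)² ≤ (1/4)(1−δ)ε² for each i, and define the perturbed empirical seminorm ‖v‖_{η,n} := ((1/n) Σ_{i=1}^n w(y_i)(|v|_{y_i} + η(y_i))²)^{1/2}. Let u_M ∈ M satisfy ‖u − u_M‖ ≤ ‖u − v‖ for all v ∈ M and let u_{M,n,η} ∈ M satisfy ‖u − u_{M,n,η}‖_{η,n} ≤ ‖u − v‖_{η,n} for all v ∈ M. If RIP({u_M} − M, δ) holds and ‖u − u_M‖_n ≤ ‖u − u_M‖_{w,∞}, then ‖u_M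 − u_{M,n,η}‖ ≤ (2/√(1−δ)) ‖u − u_M‖_{w,∞} + ε. If in addition RIP({u − u_M}, δ) holds, then ‖u_M − u_{M,n,η}‖ ≤ 2√((1+δ)/(1−δ)) ‖u − u_M‖ + ε. -/
open MeasureTheory ENNReal


private lemma aux_le_of_sq_le_sq {x y : ℝ} (hy : 0 ≤ y) (h : x ^ 2 ≤ y ^ 2) : x ≤ y := by
  nlinarith [sq_nonneg (x + y), sq_nonneg (x - y)]

/-- (Reconstruction with noise, Remark 3.10.) With the perturbed
empirical seminorm `‖v‖_{η,n}` and noise bound `w(y_i) η(y_i)² ≤ (1/4)(1−δ)ε²`,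
if RIP({u_M} − M, δ) holds then `‖u_M − u_{M,n,η}‖ ≤ (2/√(1−δ)) ‖u − u_M‖_{w,∞} + ε`;
if additionally RIP({u − u_M}, δ) holds then
`‖u_M − u_{M,n,η}‖ ≤ 2√((1+δ)/(1−δ)) ‖u − u_M‖ + ε`. -/
theorem empirical_projection_error_noisy
    {Y : Type*} [MeasurableSpace Y] (ρ : Measure Y) [IsProbabilityMeasure ρ]
    {V : Type*} [AddCommGroup V] [Module ℝ V]
    -- the family of seminorms
    (nrm : Y → V → ℝ)
    (hnrm_nonneg : ∀ y v, 0 ≤ nrm y v)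
    (hnrm_smul : ∀ (y : Y) (a : ℝ) (v : V), nrm y (a • v) = |a| * nrm y v)
    (hnrm_add : ∀ (y : Y) (u v : V), nrm y (u + v) ≤ nrm y u + nrm y v)
    (hnrm_meas : ∀ v, Measurable fun y => nrm y v)
    (hnrm_int : ∀ v, Integrable (fun y => nrm y v ^ 2) ρ)
    -- the norm ‖·‖
    (Nrm : V → ℝ) (hNrm : ∀ v, Nrm v = Real.sqrt (∫ y, nrm y v ^ 2 ∂ρ))
    (hNrm_norm : ∀ v, Nrm v = 0 → v = 0)
    -- the weight function
    (w : Y → ℝ) (hw_meas : Measurable w) (hw_pos : ∀ y, 0 < w y)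
    (hw_int : ∫ y, (w y)⁻¹ ∂ρ = 1)
    -- the samples and the empirical seminorm
    (n : ℕ) (hn : 0 < n) (ys : Fin n → Y)
    (empn : V → ℝ)
    (hempn : ∀ v, empn v = Real.sqrt ((n : ℝ)⁻¹ * ∑ i, w (ys i) * nrm (ys i) v ^ 2))
    -- the (w,∞)-norm
    (Wnorm : V → ℝ)
    (hWnorm : ∀ v, Wnorm v = Real.sqrt (essSup (fun y => w y * nrm y v ^ 2) ρ))
    (M : Set V) (u : V) (δ : ℝ) (hδ0 : 0 < δ) (hδ1 : δ < 1) (ε : ℝ) (hε : 0 < ε)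
    -- the noise and the perturbed empirical seminorm
    (η : Y → ℝ) (hη_meas : Measurable η)
    (hη : ∀ i, w (ys i) * η (ys i) ^ 2 ≤ 1 / 4 * (1 - δ) * ε ^ 2)
    (empη : V → ℝ)
    (hempη : ∀ v, empη v =
      Real.sqrt ((n : ℝ)⁻¹ * ∑ i, w (ys i) * (nrm (ys i) v + η (ys i)) ^ 2))
    -- the best approximation and the perturbed empirical best approximation
    (uM : V) (huM : uM ∈ M) (huM_best : ∀ v ∈ M, Nrm (u - uM) ≤ Nrm (u - v))
    (uMnη : V) (huMnη : uMnη ∈ M)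
    (huMnη_best : ∀ v ∈ M, empη (u - uMnη) ≤ empη (u - v))
    -- RIP({u_M} − M, δ)
    (hRIP : ∀ v ∈ M,
      (1 - δ) * Nrm (uM - v) ^ 2 ≤ empn (uM - v) ^ 2 ∧
      empn (uM - v) ^ 2 ≤ (1 + δ) * Nrm (uM - v) ^ 2)
    -- ‖u − u_M‖ₙ ≤ ‖u − u_M‖_{w,∞} (holds for almost every sample tuple)
    (hbound : empn (u - uM) ≤ Wnorm (u - uM)) :
    Nrm (uM - uMnη) ≤ 2 / Real.sqrt (1 - δ) * Wnorm (u - uM) + ε ∧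
    (((1 - δ) * Nrm (u - uM) ^ 2 ≤ empn (u - uM) ^ 2 ∧
        empn (u - uM) ^ 2 ≤ (1 + δ) * Nrm (u - uM) ^ 2) →
      Nrm (uM - uMnη) ≤ 2 * Real.sqrt ((1 + δ) / (1 - δ)) * Nrm (u - uM) + ε) := by
  have hδ' : (0:ℝ) < 1 - δ := by linarith
  have hsq : 0 < Real.sqrt (1 - δ) := Real.sqrt_pos.mpr hδ'
  have hsym : ∀ y (v : V), nrm y (-v) = nrm y v := by
    intro y v
    have := hnrm_smul y (-1) v
    simpa using this
  have hcnn : ∀ i, (0:ℝ) ≤ (n : ℝ)⁻¹ * w (ys i) := fun i =>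
    mul_nonneg (by positivity) (hw_pos _).le
  set c : Fin n → ℝ := fun i => Real.sqrt ((n : ℝ)⁻¹ * w (ys i)) with hc
  have hc_sq : ∀ i, c i ^ 2 = (n : ℝ)⁻¹ * w (ys i) := fun i => Real.sq_sqrt (hcnn i)
  have hc_nn : ∀ i, 0 ≤ c i := fun i => Real.sqrt_nonneg _
  set F : V → EuclideanSpace ℝ (Fin n) :=
    fun v => (WithLp.equiv 2 (Fin n → ℝ)).symm (fun i => c i * nrm (ys i) v) with hFdef
  set e : EuclideanSpace ℝ (Fin n) :=
    (WithLp.equiv 2 (Fin n → ℝ)).symm (fun i => c i * η (ys i)) with hedef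
  have hFnorm : ∀ v, empn v = ‖F v‖ := by
    intro v
    rw [hempn, EuclideanSpace.norm_eq]
    congr 1
    rw [Finset.mul_sum]
    refine Finset.sum_congr rfl fun i _ => ?_
    simp only [hFdef, WithLp.equiv_symm_apply, WithLp.ofLp_toLp, Real.norm_eq_abs, sq_abs, mul_pow, hc_sq]
    ring
  have hηnorm : ∀ v, empη v = ‖F v + e‖ := by
    intro v
    rw [hempη, EuclideanSpace.norm_eq]
    congr 1
    rw [Finset.mul_sum]
    refine Finset.sum_congr rfl fun i _ => ?_
    simp only [hFdef, hedef, PiLp.add_apply, WithLp.equiv_symm_apply, WithLp.ofLp_toLp, Real.norm_eq_abs,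
      sq_abs]
    rw [← mul_add, mul_pow, hc_sq]
    ring
  have henn : ∀ v, 0 ≤ empn v := fun v => by rw [hempn]; exact Real.sqrt_nonneg _
  have hNnn : ∀ v, 0 ≤ Nrm v := fun v => by rw [hNrm]; exact Real.sqrt_nonneg _
  have he_bound : ‖e‖ ≤ Real.sqrt (1 - δ) / 2 * ε := by
    have h1 : ‖e‖ ^ 2 = ∑ i, ((n:ℝ)⁻¹ * w (ys i)) * η (ys i) ^ 2 := by
      rw [EuclideanSpace.norm_eq, Real.sq_sqrt (by positivity)]
      refine Finset.sum_congr rfl fun i _ => ?_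
      simp only [hedef, WithLp.equiv_symm_apply, WithLp.ofLp_toLp, Real.norm_eq_abs, sq_abs, mul_pow, hc_sq]
    have h2 : ‖e‖ ^ 2 ≤ 1 / 4 * (1 - δ) * ε ^ 2 := by
      rw [h1]
      calc ∑ i, ((n:ℝ)⁻¹ * w (ys i)) * η (ys i) ^ 2
          ≤ ∑ _i : Fin n, (n:ℝ)⁻¹ * (1 / 4 * (1 - δ) * ε ^ 2) := by
            refine Finset.sum_le_sum fun i _ => ?_
            rw [mul_assoc]
            exact mul_le_mul_of_nonneg_left (hη i) (by positivity)
        _ = 1 / 4 * (1 - δ) * ε ^ 2 := by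
            rw [Finset.sum_const, Finset.card_univ, Fintype.card_fin, nsmul_eq_mul]
            have hn' : (n:ℝ) ≠ 0 := Nat.cast_ne_zero.mpr hn.ne'
            field_simp
    refine aux_le_of_sq_le_sq (by positivity) ?_
    calc ‖e‖ ^ 2 ≤ 1 / 4 * (1 - δ) * ε ^ 2 := h2
      _ = (Real.sqrt (1 - δ) / 2 * ε) ^ 2 := by
          rw [mul_pow, div_pow, Real.sq_sqrt hδ'.le]; ring
  have htri : empn (uM - uMnη) ≤ empn (u - uMnη) + empn (u - uM) := by
    rw [hFnorm, hFnorm, hFnorm]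
    calc ‖F (uM - uMnη)‖ ≤ ‖F (u - uMnη) + F (u - uM)‖ := by
          rw [EuclideanSpace.norm_eq, EuclideanSpace.norm_eq]
          apply Real.sqrt_le_sqrt
          refine Finset.sum_le_sum fun i _ => ?_
          simp only [hFdef, PiLp.add_apply, WithLp.equiv_symm_apply, WithLp.ofLp_toLp, Real.norm_eq_abs,
            sq_abs]
          have hpt : nrm (ys i) (uM - uMnη) ≤ nrm (ys i) (u - uMnη) + nrm (ys i) (u - uM) := by
            have h := hnrm_add (ys i) (u - uMnη) (uM - u)
            have h2 : (u - uMnη) + (uM - u) = uM - uMnη := by abel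
            have h3 : nrm (ys i) (uM - u) = nrm (ys i) (u - uM) := by
              rw [← hsym (ys i) (u - uM), neg_sub]
            rw [h2, h3] at h
            linarith
          have hml : c i * nrm (ys i) (uM - uMnη) ≤
              c i * nrm (ys i) (u - uMnη) + c i * nrm (ys i) (u - uM) := by
            rw [← mul_add]
            exact mul_le_mul_of_nonneg_left hpt (hc_nn i)
          exact pow_le_pow_left₀ (mul_nonneg (hc_nn i) (hnrm_nonneg _ _)) hml 2
      _ ≤ ‖F (u - uMnη)‖ + ‖F (u - uM)‖ := norm_add_le _ _
  have hchain : empn (u - uMnη) ≤ empn (u - uM) + 2 * ‖e‖ := by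
    have a1 : empn (u - uMnη) ≤ empη (u - uMnη) + ‖e‖ := by
      rw [hFnorm, hηnorm]
      exact norm_le_add_norm_add _ _
    have a2 : empη (u - uMnη) ≤ empη (u - uM) := huMnη_best uM huM
    have a3 : empη (u - uM) ≤ empn (u - uM) + ‖e‖ := by
      rw [hFnorm, hηnorm]
      exact norm_add_le _ _
    linarith
  have hlow : Real.sqrt (1 - δ) * Nrm (uM - uMnη) ≤ empn (uM - uMnη) := by
    refine aux_le_of_sq_le_sq (henn _) ?_
    rw [mul_pow, Real.sq_sqrt hδ'.le]
    exact (hRIP uMnη huMnη).1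
  have hmain : Nrm (uM - uMnη) ≤ 2 / Real.sqrt (1 - δ) * empn (u - uM) + ε := by
    have h1 : Nrm (uM - uMnη) * Real.sqrt (1 - δ) ≤
        2 * empn (u - uM) + Real.sqrt (1 - δ) * ε := by
      nlinarith [he_bound, hlow, htri, hchain]
    have h2 := (le_div_iff₀ hsq).mpr h1
    refine h2.trans_eq ?_
    field_simp
  constructor
  · calc Nrm (uM - uMnη) ≤ 2 / Real.sqrt (1 - δ) * empn (u - uM) + ε := hmain
      _ ≤ 2 / Real.sqrt (1 - δ) * Wnorm (u - uM) + ε := by gcongr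
  · intro hRIP2
    have hE : empn (u - uM) ≤ Real.sqrt (1 + δ) * Nrm (u - uM) := by
      refine aux_le_of_sq_le_sq (mul_nonneg (Real.sqrt_nonneg _) (hNnn _)) ?_
      rw [mul_pow, Real.sq_sqrt (by linarith : (0:ℝ) ≤ 1 + δ)]
      exact hRIP2.2
    calc Nrm (uM - uMnη) ≤ 2 / Real.sqrt (1 - δ) * empn (u - uM) + ε := hmain
      _ ≤ 2 / Real.sqrt (1 - δ) * (Real.sqrt (1 + δ) * Nrm (u - uM)) + ε := by gcongr
      _ = 2 * Real.sqrt ((1 + δ) / (1 - δ)) * Nrm (u - uM) + ε := by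
          rw [Real.sqrt_div (by linarith : (0:ℝ) ≤ 1 + δ)]
          field_simp
end

section
/- Let A ⊆ V and suppose there is a countable subset D ⊆ A such that for every y ∈ Y the pointwise supremum b̂(y) := sup_{v∈A} |v|_y² equals sup_{v∈D} |v|_y². Assume 0 < ∫_Y b̂ dρ < ∞ and b̂(y) > 0 for ρ-almost every y. Then: (i) for every weight function w, K_w(A) ≥ ∫_Y b̂ dρ; and (ii) the function w* := (∫_Y b̂ dρ) · b̂^{-1} is a weight function (i.e. ∫_Y (w*)^{-1} dρ = 1) and K_{w*}(A) = ∫_Y b̂ dρ, so the lower bound is attained by w*. -/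
open MeasureTheory ENNReal

/-- (Theorem 3.12, second part: optimal sampling.) If
`0 < ∫ b̂ dρ < ∞` and `b̂ > 0` a.e., then `K_w(A) ≥ ∫ b̂ dρ` for every weight
function `w`, and the weight function `w* = (∫ b̂ dρ)·b̂⁻¹` attains this bound:
`∫ (w*)⁻¹ dρ = 1` and `K_{w*}(A) = ∫ b̂ dρ`. -/
theorem optimal_weight_function
    {Y : Type*} [MeasurableSpace Y] (ρ : Measure Y) [IsProbabilityMeasure ρ]
    {V : Type*} [AddCommGroup V] [Module ℝ V]
    -- the family of seminorms
    (nrm : Y → V → ℝ)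
    (hnrm_nonneg : ∀ y v, 0 ≤ nrm y v)
    (hnrm_smul : ∀ (y : Y) (a : ℝ) (v : V), nrm y (a • v) = |a| * nrm y v)
    (hnrm_add : ∀ (y : Y) (u v : V), nrm y (u + v) ≤ nrm y u + nrm y v)
    (hnrm_meas : ∀ v, Measurable fun y => nrm y v)
    (hnrm_int : ∀ v, Integrable (fun y => nrm y v ^ 2) ρ)
    -- the sets A and D
    (A D : Set V) (hD_count : D.Countable) (hDA : D ⊆ A)
    -- the pointwise supremum b̂
    (bhat : Y → ℝ)
    (hbhatA : ∀ y, IsLUB ((fun v => nrm y v ^ 2) '' A) (bhat y))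
    (hbhatD : ∀ y, IsLUB ((fun v => nrm y v ^ 2) '' D) (bhat y))
    -- b̂ is integrable with positive integral and positive a.e.
    (hb_int : Integrable bhat ρ) (hb_pos_int : 0 < ∫ y, bhat y ∂ρ)
    (hb_pos : ∀ᵐ y ∂ρ, 0 < bhat y) :
    -- (i) every weight function satisfies K_w(A) ≥ ∫ b̂ dρ
    (∀ w : Y → ℝ, Measurable w → (∀ y, 0 < w y) → (∫ y, (w y)⁻¹ ∂ρ = 1) →
      ENNReal.ofReal (∫ y, bhat y ∂ρ) ≤
        ⨆ u ∈ A, essSup (fun y => ENNReal.ofReal (w y * nrm y u ^ 2)) ρ) ∧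
    -- (ii) the weight function w* = (∫ b̂ dρ)·b̂⁻¹ attains the lower bound
    (∫ y, ((∫ z, bhat z ∂ρ) / bhat y)⁻¹ ∂ρ = 1) ∧
    (⨆ u ∈ A,
        essSup (fun y => ENNReal.ofReal ((∫ z, bhat z ∂ρ) / bhat y * nrm y u ^ 2)) ρ) =
      ENNReal.ofReal (∫ y, bhat y ∂ρ) := by

  have hY : Nonempty Y := by
    by_contra h
    rw [not_nonempty_iff] at h
    have h1 : ρ Set.univ = 1 := measure_univ
    rw [Set.univ_eq_empty_iff.2 h] at h1
    simp at h1
  have hDne : D.Nonempty := by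
    obtain ⟨y⟩ := hY
    by_contra h
    rw [Set.not_nonempty_iff_eq_empty] at h
    have h2 : bhat y - 1 ∈ upperBounds ((fun v => nrm y v ^ 2) '' D) := by
      simp [h, upperBounds]
    have := (hbhatD y).2 h2
    linarith
  set I := ∫ y, bhat y ∂ρ with hI
  have hub : ∀ y, ∀ u ∈ A, nrm y u ^ 2 ≤ bhat y := fun y u hu =>
    (hbhatA y).1 ⟨u, hu, rfl⟩
  obtain ⟨f, hf⟩ := Set.Countable.exists_eq_range hD_count hDne
  have hbmeas : Measurable bhat := by
    apply Measurable.isLUB (f := fun n y => nrm y (f n) ^ 2)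
    · intro n; exact (hnrm_meas (f n)).pow_const 2
    · intro y
      convert hbhatD y using 1
      · rfl
      rw [hf]
      ext a
      constructor
      · rintro ⟨i, hi⟩; exact ⟨f i, ⟨i, rfl⟩, hi⟩
      · rintro ⟨x, ⟨i, rfl⟩, h⟩; exact ⟨i, h⟩
  have key : ∀ w : Y → ℝ, Measurable w → (∀ᵐ y ∂ρ, 0 < w y) → (∫ y, (w y)⁻¹ ∂ρ = 1) →
      ENNReal.ofReal I ≤ ⨆ u ∈ A, essSup (fun y => ENNReal.ofReal (w y * nrm y u ^ 2)) ρ := by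
    intro w hw hwpos hwint
    set K := ⨆ u ∈ A, essSup (fun y => ENNReal.ofReal (w y * nrm y u ^ 2)) ρ with hK
    by_cases hKtop : K = ⊤
    · rw [hKtop]; exact le_top
    have hwinv_int : Integrable (fun y => (w y)⁻¹) ρ := by
      by_contra hni
      rw [integral_undef hni] at hwint; norm_num at hwint
    have hae : ∀ᵐ y ∂ρ, ∀ u ∈ D, w y * nrm y u ^ 2 ≤ K.toReal := by
      rw [ae_ball_iff hD_count]
      intro u hu
      have h1 : essSup (fun y => ENNReal.ofReal (w y * nrm y u ^ 2)) ρ ≤ K :=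
        le_biSup
          (f := fun u => essSup (fun y => ENNReal.ofReal (w y * nrm y u ^ 2)) ρ) (hDA hu)
      filter_upwards [ENNReal.ae_le_essSup
        (fun y => ENNReal.ofReal (w y * nrm y u ^ 2))] with y hy
      exact (ENNReal.ofReal_le_iff_le_toReal hKtop).1 (hy.trans h1)
    have hae2 : ∀ᵐ y ∂ρ, bhat y ≤ K.toReal * (w y)⁻¹ := by
      filter_upwards [hae, hwpos] with y hy hpos
      refine (hbhatD y).2 ?_
      rintro x ⟨u, hu, rfl⟩
      show nrm y u ^ 2 ≤ K.toReal * (w y)⁻¹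
      rw [← div_eq_mul_inv, le_div_iff₀ hpos, mul_comm]
      exact hy u hu
    have hmono : I ≤ ∫ y, K.toReal * (w y)⁻¹ ∂ρ :=
      integral_mono_ae hb_int (hwinv_int.const_mul _) hae2
    rw [integral_const_mul, hwint, mul_one] at hmono
    calc ENNReal.ofReal I ≤ ENNReal.ofReal K.toReal := ENNReal.ofReal_le_ofReal hmono
      _ = K := ENNReal.ofReal_toReal hKtop
  have hwint : ∫ y, (I / bhat y)⁻¹ ∂ρ = 1 := by
    simp_rw [inv_div]
    rw [integral_div]
    exact div_self hb_pos_int.ne'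
  refine ⟨fun w hw hwp hwi => key w hw (Filter.Eventually.of_forall hwp) hwi, hwint, ?_⟩
  refine le_antisymm ?_ ?_
  · refine iSup₂_le fun u hu => ?_
    refine essSup_le_of_ae_le _ ?_
    filter_upwards [hb_pos] with y hy
    refine ENNReal.ofReal_le_ofReal ?_
    calc I / bhat y * nrm y u ^ 2 ≤ I / bhat y * bhat y := by
          apply mul_le_mul_of_nonneg_left (hub y u hu)
          positivity
      _ = I := div_mul_cancel₀ _ hy.ne'
  · refine key (fun y => I / bhat y) (measurable_const.div hbmeas) ?_ hwint
    filter_upwards [hb_pos] with y hy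
    exact div_pos hb_pos_int hy
end

section
/- Let (Y, ρ) be a probability space and let B_1,…,B_m : Y → ℝ be measurable functions that are orthonormal in L²(Y, ρ). Define b̂(y) := Σ_{j=1}^m B_j(y)². Then: (i) for every y ∈ Y, sup{ (Σ_{j=1}^m c_j B_j(y))² : c ∈ ℝ^m, ‖c‖₂ = 1 } = b̂(y); (ii) ∫_Y b̂ dρ = m; (iii) for every measurable w : Y → (0,∞) with ∫_Y w^{-1} dρ = 1 one has esssup_{y∈Y} w(y) b̂(y) ≥ m; and (iv) if b̂(y) > 0 for ρ-almost every y, then w*(y) := m / b̂(y) satisfies ∫_Y (w*)^{-1} dρ = 1 and esssup_{y∈Y} w*(y) b̂(y) = m. -/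
open MeasureTheory ENNReal

/-- (Linear spaces, Section 4.1.) For an orthonormal family
`B_1,…,B_m` in `L²(Y,ρ)` and `b̂(y) = Σ_j B_j(y)²`:
(i) `b̂(y)` is the supremum of `(Σ_j c_j B_j(y))²` over unit vectors `c`;
(ii) `∫ b̂ dρ = m`;
(iii) every weight function `w` satisfies `esssup w·b̂ ≥ m`;
(iv) if `b̂ > 0` a.e. then `w* = m/b̂` is a weight function with `esssup w*·b̂ = m`. -/
theorem linear_space_variation_constant
    {Y : Type*} [MeasurableSpace Y] (ρ : Measure Y) [IsProbabilityMeasure ρ]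
    (m : ℕ) (hm : 0 < m)
    (B : Fin m → Y → ℝ) (hB_meas : ∀ j, Measurable (B j))
    (hB_on : ∀ i j, ∫ y, B i y * B j y ∂ρ = if i = j then 1 else 0) :
    -- (i)
    (∀ y, IsLUB
      {t : ℝ | ∃ c : Fin m → ℝ, (∑ j, c j ^ 2 = 1) ∧ t = (∑ j, c j * B j y) ^ 2}
      (∑ j, B j y ^ 2)) ∧
    -- (ii)
    (∫ y, (∑ j, B j y ^ 2) ∂ρ = m) ∧
    -- (iii)
    (∀ w : Y → ℝ, Measurable w → (∀ y, 0 < w y) → (∫ y, (w y)⁻¹ ∂ρ = 1) →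
      (m : ℝ≥0∞) ≤ essSup (fun y => ENNReal.ofReal (w y * ∑ j, B j y ^ 2)) ρ) ∧
    -- (iv)
    ((∀ᵐ y ∂ρ, 0 < ∑ j, B j y ^ 2) →
      (∫ y, ((m : ℝ) / ∑ j, B j y ^ 2)⁻¹ ∂ρ = 1) ∧
      essSup (fun y => ENNReal.ofReal ((m : ℝ) / (∑ j, B j y ^ 2) * ∑ j, B j y ^ 2)) ρ =
        (m : ℝ≥0∞)) := by
  -- basic facts
  have hb_nonneg : ∀ y, (0:ℝ) ≤ ∑ j, B j y ^ 2 := fun y =>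
    Finset.sum_nonneg fun j _ => sq_nonneg _
  have hint : ∀ j, Integrable (fun y => B j y ^ 2) ρ := by
    intro j
    have h : Integrable (fun y => B j y * B j y) ρ := by
      by_contra h
      have := integral_undef h
      rw [hB_on j j] at this
      simp at this
    simpa [sq] using h
  have hpart2 : ∫ y, (∑ j, B j y ^ 2) ∂ρ = m := by
    rw [integral_finset_sum _ fun j _ => hint j]
    have : ∀ j : Fin m, ∫ y, B j y ^ 2 ∂ρ = 1 := by
      intro j
      have := hB_on j j
      simpa [sq] using this
    simp [this]
  have hb_int : Integrable (fun y => ∑ j, B j y ^ 2) ρ :=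
    integrable_finset_sum _ fun j _ => hint j
  refine ⟨?_, hpart2, ?_, ?_⟩
  · -- (i)
    intro y
    set v : Fin m → ℝ := fun j => B j y with hv
    have hub : ∀ t ∈ {t : ℝ | ∃ c : Fin m → ℝ, (∑ j, c j ^ 2 = 1) ∧
        t = (∑ j, c j * B j y) ^ 2}, t ≤ ∑ j, B j y ^ 2 := by
      rintro t ⟨c, hc, rfl⟩
      calc (∑ j, c j * B j y) ^ 2 ≤ (∑ j, c j ^ 2) * ∑ j, B j y ^ 2 :=
            Finset.sum_mul_sq_le_sq_mul_sq _ _ _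
        _ = ∑ j, B j y ^ 2 := by rw [hc, one_mul]
    refine IsGreatest.isLUB ⟨?_, hub⟩
    by_cases hb : (∑ j, B j y ^ 2) = 0
    · refine ⟨fun j => if j = ⟨0, hm⟩ then 1 else 0, ?_, ?_⟩
      · simp [Finset.sum_ite_eq']
      · have hz : ∀ j : Fin m, B j y = 0 := by
          intro j
          have := (Finset.sum_eq_zero_iff_of_nonneg
            (fun j _ => sq_nonneg (B j y))).mp hb j (Finset.mem_univ j)
          exact pow_eq_zero_iff (two_ne_zero) |>.mp this
        simp [hz, hb]
    · have hbpos : 0 < ∑ j, B j y ^ 2 := lt_of_le_of_ne (hb_nonneg y) (Ne.symm hb)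
      set b := ∑ j, B j y ^ 2
      refine ⟨fun j => B j y / Real.sqrt b, ?_, ?_⟩
      · have : ∑ j, (B j y / Real.sqrt b) ^ 2 = (∑ j, B j y ^ 2) / b := by
          rw [Finset.sum_div]
          congr 1; ext j
          rw [div_pow, Real.sq_sqrt hbpos.le]
        rw [this]
        exact div_self hb
      · have hs : ∑ j, B j y / Real.sqrt b * B j y = b / Real.sqrt b := by
          simp only [div_mul_eq_mul_div, ← pow_two, ← Finset.sum_div]
          rfl
        rw [hs, div_pow, Real.sq_sqrt hbpos.le, sq]
        field_simp
  · -- (iii)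
    intro w hw_meas hw_pos hw_int1
    have hw_int : Integrable (fun y => (w y)⁻¹) ρ := by
      by_contra h
      have := integral_undef h
      rw [hw_int1] at this; simp at this
    set S := essSup (fun y => ENNReal.ofReal (w y * ∑ j, B j y ^ 2)) ρ with hS
    have h1 : ∫⁻ y, ENNReal.ofReal (∑ j, B j y ^ 2) ∂ρ = (m : ℝ≥0∞) := by
      rw [← ofReal_integral_eq_lintegral_ofReal hb_int (ae_of_all _ hb_nonneg), hpart2,
        ENNReal.ofReal_natCast]
    have h2 : ∫⁻ y, ENNReal.ofReal ((w y)⁻¹) ∂ρ = 1 := by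
      rw [← ofReal_integral_eq_lintegral_ofReal hw_int
        (ae_of_all _ fun y => (inv_pos.mpr (hw_pos y)).le), hw_int1, ENNReal.ofReal_one]
    have hpt : ∀ y, ENNReal.ofReal (∑ j, B j y ^ 2) =
        ENNReal.ofReal (w y * ∑ j, B j y ^ 2) * ENNReal.ofReal ((w y)⁻¹) := by
      intro y
      rw [← ENNReal.ofReal_mul (mul_nonneg (hw_pos y).le (hb_nonneg y))]
      congr 1
      rw [mul_comm (w y), mul_assoc, mul_inv_cancel₀ (hw_pos y).ne', mul_one]
    calc (m : ℝ≥0∞) = ∫⁻ y, ENNReal.ofReal (∑ j, B j y ^ 2) ∂ρ := h1.symm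
      _ = ∫⁻ y, ENNReal.ofReal (w y * ∑ j, B j y ^ 2) * ENNReal.ofReal ((w y)⁻¹) ∂ρ :=
          lintegral_congr hpt
      _ ≤ ∫⁻ y, S * ENNReal.ofReal ((w y)⁻¹) ∂ρ := by
          refine lintegral_mono_ae ?_
          filter_upwards [ae_le_essSup
            (fun y => ENNReal.ofReal (w y * ∑ j, B j y ^ 2))] with y hy
          exact mul_le_mul_left hy _
      _ = S * ∫⁻ y, ENNReal.ofReal ((w y)⁻¹) ∂ρ :=
          lintegral_const_mul _ (by measurability)
      _ = S := by rw [h2, mul_one]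
  · -- (iv)
    intro hpos
    have hm' : (m : ℝ) ≠ 0 := Nat.cast_ne_zero.mpr hm.ne'
    constructor
    · have : ∀ y, ((m : ℝ) / ∑ j, B j y ^ 2)⁻¹ = (∑ j, B j y ^ 2) / m := fun y =>
        inv_div _ _
      simp_rw [this]
      rw [integral_div, hpart2, div_self hm']
    · have hcongr : (fun y => ENNReal.ofReal ((m : ℝ) / (∑ j, B j y ^ 2) * ∑ j, B j y ^ 2))
          =ᵐ[ρ] fun _ => (m : ℝ≥0∞) := by
        filter_upwards [hpos] with y hy
        rw [div_mul_cancel₀ _ hy.ne', ENNReal.ofReal_natCast]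
      rw [essSup_congr_ae hcongr, essSup_const]
      exact (IsProbabilityMeasure.ne_zero ρ)
end

section
/- For every s > 0 and every v ∈ M_{ω,s} one has ‖v‖_{w,∞} ≤ √s · ‖v‖_{L²(ρ)}. Consequently K(U(M_{ω,s})) := sup{ ‖v‖_{w,∞}² / ‖v‖_{L²(ρ)}² : v ∈ M_{ω,s}, v ≠ 0 } ≤ s. -/
open MeasureTheory ENNReal
open scoped Classical

private lemma l2_mul_integrable' {Y : Type*} [MeasurableSpace Y] {ρ : Measure Y}
    {f g : Y → ℝ} (hf : MemLp f 2 ρ) (hg : MemLp g 2 ρ) :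
    Integrable (fun y => f y * g y) ρ := by
  refine Integrable.mono' (hf.integrable_sq.add hg.integrable_sq)
    (hf.aestronglyMeasurable.mul hg.aestronglyMeasurable) ?_
  filter_upwards with y
  simp only [Pi.add_apply]
  rw [Real.norm_eq_abs, abs_mul]
  nlinarith [sq_abs (f y), sq_abs (g y), sq_nonneg (|f y| - |g y|),
    abs_nonneg (f y), abs_nonneg (g y)]

/-- (Lemma 4.5-4.6: weighted-sparse functions.) If
`ω_j ≥ ‖B_j‖_{w,∞}` for all `j`, then every `v ∈ M_{ω,s}` satisfies
`‖v‖_{w,∞} ≤ √s ‖v‖_{L²(ρ)}` (stated in squared form); consequently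
`K(U(M_{ω,s})) ≤ s`. -/
theorem weighted_sparse_winf_bound
    {Y : Type*} [MeasurableSpace Y] (ρ : Measure Y) [IsProbabilityMeasure ρ]
    -- an orthonormal basis (B_j) of L²(Y,ρ)
    (B : ℕ → Y → ℝ) (hB_meas : ∀ j, Measurable (B j))
    (hB_on : ∀ i j, ∫ y, B i y * B j y ∂ρ = if i = j then 1 else 0)
    (hB_complete : ∀ f : Y → ℝ, MemLp f 2 ρ →
      (∀ j, ∫ y, f y * B j y ∂ρ = 0) → f =ᵐ[ρ] 0)
    -- the weight function
    (w : Y → ℝ) (hw_meas : Measurable w) (hw_pos : ∀ y, 0 < w y)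
    (hw_int : ∫ y, (w y)⁻¹ ∂ρ = 1)
    -- the weight sequence ω with ω_j ≥ ‖B_j‖_{w,∞}
    (ω : ℕ → ℝ) (hω_nonneg : ∀ j, 0 ≤ ω j)
    (hω : ∀ j, essSup (fun y => ENNReal.ofReal (w y * B j y ^ 2)) ρ ≤
      ENNReal.ofReal (ω j ^ 2))
    (s : ℝ) (hs : 0 < s)
    -- v ∈ M_{ω,s}: v ∈ L²(ρ) with weighted ℓ⁰-seminorm of its coefficients ≤ s
    (v : Y → ℝ) (hv : MemLp v 2 ρ)
    (hv_sparse : ∑' j, (if (∫ y, v y * B j y ∂ρ) = 0 then 0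
      else ENNReal.ofReal (ω j ^ 2)) ≤ ENNReal.ofReal s) :
    essSup (fun y => ENNReal.ofReal (w y * v y ^ 2)) ρ ≤
      ENNReal.ofReal (s * ∫ y, v y ^ 2 ∂ρ) := by
  set c : ℕ → ℝ := fun j => ∫ y, v y * B j y ∂ρ with hc
  -- B_j * B_j is integrable (else its integral would be 0, not 1)
  have hBint : ∀ j, Integrable (fun y => B j y * B j y) ρ := by
    intro j
    by_contra h
    have h1 := hB_on j j
    rw [integral_undef h] at h1
    simp at h1
  have hBL2 : ∀ j, MemLp (B j) 2 ρ := by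
    intro j
    rw [memLp_two_iff_integrable_sq (hB_meas j).aestronglyMeasurable]
    simpa [pow_two] using hBint j
  -- a.e. pointwise bound from the essSup hypothesis
  have hae : ∀ j, ∀ᵐ y ∂ρ, w y * B j y ^ 2 ≤ ω j ^ 2 := by
    intro j
    have h1 := _root_.ae_le_essSup (f := fun y => ENNReal.ofReal (w y * B j y ^ 2)) (μ := ρ)
    filter_upwards [h1] with y hy
    have h2 : ENNReal.ofReal (w y * B j y ^ 2) ≤ ENNReal.ofReal (ω j ^ 2) :=
      hy.trans (hω j)
    exact (ENNReal.ofReal_le_ofReal_iff (sq_nonneg (ω j))).mp h2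
  -- w⁻¹ is integrable
  have hwinv_int : Integrable (fun y => (w y)⁻¹) ρ := by
    by_contra h
    rw [integral_undef h] at hw_int
    norm_num at hw_int
  -- each ω_j² ≥ 1
  have hω1 : ∀ j, (1 : ℝ) ≤ ω j ^ 2 := by
    intro j
    have hint : ∫ y, B j y * B j y ∂ρ = 1 := by simpa using hB_on j j
    have hle : ∀ᵐ y ∂ρ, B j y * B j y ≤ (w y)⁻¹ * ω j ^ 2 := by
      filter_upwards [hae j] with y hy
      have hw := hw_pos y
      calc B j y * B j y = (w y)⁻¹ * (w y * B j y ^ 2) := by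
            field_simp
        _ ≤ (w y)⁻¹ * ω j ^ 2 :=
            mul_le_mul_of_nonneg_left hy (inv_nonneg.2 hw.le)
    have h2 := integral_mono_ae (hBint j) (hwinv_int.mul_const _) hle
    rw [hint] at h2
    calc (1 : ℝ) ≤ ∫ y, (w y)⁻¹ * ω j ^ 2 ∂ρ := h2
      _ = (∫ y, (w y)⁻¹ ∂ρ) * ω j ^ 2 := integral_mul_const _ _
      _ = ω j ^ 2 := by rw [hw_int, one_mul]
  -- the support of the coefficients is finite
  set F : ℕ → ℝ≥0∞ := fun j => if c j = 0 then 0 else ENNReal.ofReal (ω j ^ 2) with hF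
  have hFtop : ∑' j, F j ≠ ∞ := (hv_sparse.trans_lt ofReal_lt_top).ne
  have hSfin : {j | c j ≠ 0}.Finite := by
    refine (ENNReal.finite_const_le_of_tsum_ne_top hFtop (ε := 1) one_ne_zero).subset ?_
    intro j hj
    simp only [Set.mem_setOf_eq] at hj ⊢
    rw [hF]
    simp only [hj, if_neg hj]
    calc (1 : ℝ≥0∞) = ENNReal.ofReal 1 := by simp
      _ ≤ ENNReal.ofReal (ω j ^ 2) := ENNReal.ofReal_le_ofReal (hω1 j)
  set T : Finset ℕ := hSfin.toFinset with hT
  have hmemT : ∀ j, j ∈ T ↔ c j ≠ 0 := by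
    intro j; rw [hT]; exact hSfin.mem_toFinset
  -- the finite expansion g
  set g : Y → ℝ := fun y => ∑ j ∈ T, c j * B j y with hg
  have hgL2 : MemLp g 2 ρ := by
    rw [hg]
    exact memLp_finset_sum T (fun j _ => (hBL2 j).const_mul (c j))
  -- coefficients of g
  have hgB : ∀ j, ∫ y, g y * B j y ∂ρ = if j ∈ T then c j else 0 := by
    intro j
    have : ∀ y, g y * B j y = ∑ i ∈ T, c i * (B i y * B j y) := by
      intro y; rw [hg]; rw [Finset.sum_mul]; apply Finset.sum_congr rfl
      intro i _; ring
    simp_rw [this]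
    rw [integral_finset_sum T
      (fun i _ => (l2_mul_integrable' (hBL2 i) (hBL2 j)).const_mul (c i))]
    have : ∀ i ∈ T, ∫ y, c i * (B i y * B j y) ∂ρ =
        if i = j then c i else 0 := by
      intro i _
      rw [integral_const_mul, hB_on i j]
      split_ifs <;> simp
    rw [Finset.sum_congr rfl this, Finset.sum_ite_eq' T j (fun i => c i)]
  -- v - g is orthogonal to every B_j
  have h0 : ∀ j, ∫ y, (v y - g y) * B j y ∂ρ = 0 := by
    intro j
    have hsub : ∀ y, (v y - g y) * B j y = v y * B j y - g y * B j y := by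
      intro y; ring
    simp_rw [hsub]
    rw [integral_sub (l2_mul_integrable' hv (hBL2 j))
      (l2_mul_integrable' hgL2 (hBL2 j))]
    rw [hgB j]
    by_cases hj : j ∈ T
    · simp [hj, hc]
    · have hcj : c j = 0 := by
        by_contra h; exact hj ((hmemT j).2 h)
      simp only [if_neg hj, sub_zero]
      exact hcj
  have hvg : v =ᵐ[ρ] g := by
    have := hB_complete (fun y => v y - g y) (hv.sub hgL2) h0
    filter_upwards [this] with y hy
    exact sub_eq_zero.mp hy
  -- ∫ v² = ∑_{j ∈ T} c_j²
  have hnorm : ∫ y, v y ^ 2 ∂ρ = ∑ j ∈ T, c j ^ 2 := by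
    have h1 : ∫ y, v y ^ 2 ∂ρ = ∫ y, v y * g y ∂ρ := by
      apply integral_congr_ae
      filter_upwards [hvg] with y hy
      rw [pow_two, hy]
    rw [h1]
    have h2 : ∀ y, v y * g y = ∑ j ∈ T, c j * (v y * B j y) := by
      intro y; rw [hg, Finset.mul_sum]; apply Finset.sum_congr rfl
      intro j _; ring
    simp_rw [h2]
    rw [integral_finset_sum T
      (fun j _ => (l2_mul_integrable' hv (hBL2 j)).const_mul (c j))]
    apply Finset.sum_congr rfl
    intro j _
    rw [integral_const_mul, pow_two]
  -- ∑_{j ∈ T} ω_j² ≤ s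
  have hsum_ω : ∑ j ∈ T, ω j ^ 2 ≤ s := by
    have h1 : ∑ j ∈ T, ENNReal.ofReal (ω j ^ 2) ≤ ENNReal.ofReal s := by
      calc ∑ j ∈ T, ENNReal.ofReal (ω j ^ 2) = ∑ j ∈ T, F j := by
            apply Finset.sum_congr rfl
            intro j hj
            rw [hF]
            simp [(hmemT j).1 hj]
        _ ≤ ∑' j, F j := ENNReal.sum_le_tsum T
        _ ≤ ENNReal.ofReal s := hv_sparse
    rw [← ENNReal.ofReal_sum_of_nonneg (fun j _ => sq_nonneg (ω j))] at h1
    exact (ENNReal.ofReal_le_ofReal_iff hs.le).mp h1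
  -- ∫ v² ≥ 0
  have hvsq_nonneg : 0 ≤ ∫ y, v y ^ 2 ∂ρ :=
    integral_nonneg (fun y => sq_nonneg _)
  -- final a.e. bound
  have hcongr : (fun y => ENNReal.ofReal (w y * v y ^ 2)) =ᵐ[ρ]
      (fun y => ENNReal.ofReal (w y * g y ^ 2)) := by
    filter_upwards [hvg] with y hy
    rw [hy]
  rw [essSup_congr_ae hcongr]
  refine essSup_le_of_ae_le _ ?_
  have haeall : ∀ᵐ y ∂ρ, ∀ j, w y * B j y ^ 2 ≤ ω j ^ 2 := ae_all_iff.2 hae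
  filter_upwards [haeall] with y hy
  apply ENNReal.ofReal_le_ofReal
  have hw := hw_pos y
  have hCS : g y ^ 2 ≤ (∑ j ∈ T, c j ^ 2) * ∑ j ∈ T, B j y ^ 2 := by
    rw [hg]
    exact Finset.sum_mul_sq_le_sq_mul_sq T c (fun j => B j y)
  have hc2 : 0 ≤ ∑ j ∈ T, c j ^ 2 := Finset.sum_nonneg (fun j _ => sq_nonneg _)
  calc w y * g y ^ 2 ≤ w y * ((∑ j ∈ T, c j ^ 2) * ∑ j ∈ T, B j y ^ 2) :=
        mul_le_mul_of_nonneg_left hCS hw.le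
    _ = (∑ j ∈ T, c j ^ 2) * ∑ j ∈ T, w y * B j y ^ 2 := by
        rw [mul_left_comm]; congr 1; rw [Finset.mul_sum]
    _ ≤ (∑ j ∈ T, c j ^ 2) * ∑ j ∈ T, ω j ^ 2 :=
        mul_le_mul_of_nonneg_left (Finset.sum_le_sum (fun j _ => hy j)) hc2
    _ ≤ (∑ j ∈ T, c j ^ 2) * s := mul_le_mul_of_nonneg_left hsum_ω hc2
    _ = s * ∫ y, v y ^ 2 ∂ρ := by rw [hnorm]; ring
end

section
/- There exists a universal constant C > 0 with the following property. Let S ⊆ ℕ be finite with |S| = m and let V_m := span{B_j : j ∈ S}. Then for every s with 1 ≤ s ≤ m and every r ∈ (0,1], the covering number ν(U(M_{ω,s} ∩ V_m), r) — the smallest N ∈ ℕ such that there exist v_1,…,v_N ∈ U(M_{ω,s} ∩ V_m) whose ‖·‖_{w,∞}-balls of radius r cover U(M_{ω,s} ∩ V_m), where U(A) := {v/‖v‖_{L²(ρ)} : v ∈ A, v ≠ 0} — satisfies ν(U(M_{ω,s} ∩ V_m), r) ≤ (C m / (r √s))^s. -/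
open MeasureTheory ENNReal
open scoped Classical
open Metric Set

lemma exists_sphere_net {E : Type*} [NormedAddCommGroup E] [NormedSpace ℝ E]
    [MeasurableSpace E] [BorelSpace E] [FiniteDimensional ℝ E]
    (μ : Measure E) [μ.IsAddHaarMeasure] {ε : ℝ} (hε : 0 < ε) (hε1 : ε ≤ 1) :
    ∃ P : Finset E, (↑P ⊆ sphere (0:E) 1) ∧
      (∀ x ∈ sphere (0:E) 1, ∃ p ∈ P, dist x p < ε) ∧
      (P.card : ℝ) ≤ (3/ε) ^ (Module.finrank ℝ E) := by
  set D := Module.finrank ℝ E with hD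
  have hc0 : 0 < μ (ball (0:E) 1) := measure_ball_pos μ _ one_pos
  have hctop : μ (ball (0:E) 1) ≠ ∞ := measure_ball_lt_top.ne
  -- packing bound for separated sets
  have key : ∀ A : Finset E, (↑A ⊆ sphere (0:E) 1) →
      ((A : Set E).Pairwise fun x y => ε ≤ dist x y) → (A.card : ℝ) ≤ (3/ε) ^ D := by
    intro A hAs hAsep
    have hdisj : (A : Set E).PairwiseDisjoint (fun a => ball a (ε/2)) := by
      intro a ha b hb hab
      exact ball_disjoint_ball (by linarith [hAsep ha hb hab])
    have hsub : ∀ a ∈ A, ball a (ε/2) ⊆ ball (0:E) (1 + ε/2) := by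
      intro a ha x hx
      have h1 : dist a 0 = 1 := by simpa [mem_sphere_iff_norm] using hAs ha
      have := dist_triangle x a 0
      simp only [mem_ball, dist_zero_right] at hx ⊢
      rw [dist_zero_right] at h1
      calc ‖x‖ ≤ dist x a + ‖a‖ := by simpa [dist_zero_right] using this
        _ < ε/2 + 1 := by rw [h1]; linarith [hx]
        _ = 1 + ε/2 := by ring
    have hμsum : ∑ a ∈ A, μ (ball a (ε/2)) ≤ μ (ball (0:E) (1 + ε/2)) := by
      rw [← measure_biUnion_finset hdisj fun a _ => measurableSet_ball]
      exact measure_mono (Set.iUnion₂_subset hsub)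
    have hball : ∀ a : E, μ (ball a (ε/2)) = ENNReal.ofReal ((ε/2) ^ D) * μ (ball (0:E) 1) :=
      fun a => Measure.addHaar_ball_of_pos μ a (by linarith)
    have hO : μ (ball (0:E) (1 + ε/2)) = ENNReal.ofReal ((1 + ε/2) ^ D) * μ (ball (0:E) 1) :=
      Measure.addHaar_ball_of_pos μ _ (by linarith)
    rw [hO] at hμsum
    simp only [hball, Finset.sum_const, nsmul_eq_mul] at hμsum
    have hcard : (A.card : ℝ≥0∞) * ENNReal.ofReal ((ε/2) ^ D) ≤ ENNReal.ofReal ((1 + ε/2) ^ D) := by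
      rw [← mul_assoc] at hμsum
      exact (ENNReal.mul_le_mul_iff_left (ne_of_gt hc0) hctop).mp hμsum
    have hreal : (A.card : ℝ) * ((ε/2) ^ D) ≤ ((1 + ε/2) ^ D) := by
      have h2 : ENNReal.ofReal ((A.card : ℝ) * ((ε/2) ^ D)) ≤ ENNReal.ofReal ((1 + ε/2) ^ D) := by
        rw [ENNReal.ofReal_mul (by positivity), ENNReal.ofReal_natCast]
        exact hcard
      exact (ENNReal.ofReal_le_ofReal_iff (by positivity)).mp h2
    have hpow : ((1 + ε/2) ^ D : ℝ) ≤ (3/ε) ^ D * ((ε/2) ^ D) := by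
      rw [← mul_pow]
      apply pow_le_pow_left₀ (by linarith)
      have hq : (3:ℝ)/ε * (ε/2) = 3/2 := by field_simp
      rw [hq]; linarith
    have hεD : (0:ℝ) < (ε/2) ^ D := by positivity
    calc (A.card : ℝ) = (A.card : ℝ) * ((ε/2)^D) / ((ε/2)^D) := by field_simp
      _ ≤ ((1 + ε/2) ^ D) / ((ε/2)^D) := by gcongr
      _ ≤ (3/ε) ^ D := by rw [div_le_iff₀ hεD]; exact hpow
  -- maximal separated set
  set Q : Set ℕ := {n | ∃ A : Finset E, (↑A ⊆ sphere (0:E) 1) ∧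
      ((A : Set E).Pairwise fun x y => ε ≤ dist x y) ∧ A.card = n} with hQ
  have hQ0 : 0 ∈ Q := ⟨∅, by simp, by simp, rfl⟩
  have hQbdd : BddAbove Q := by
    refine ⟨Nat.floor ((3/ε)^D), ?_⟩
    rintro n ⟨A, hA1, hA2, rfl⟩
    exact Nat.le_floor (key A hA1 hA2)
  obtain ⟨A, hA1, hA2, hA3⟩ := Nat.sSup_mem ⟨0, hQ0⟩ hQbdd
  refine ⟨A, hA1, ?_, key A hA1 hA2⟩
  intro x hx
  by_contra hcon
  push_neg at hcon
  have hxA : x ∉ A := fun hxA => by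
    have := hcon x hxA; simp at this; linarith
  have hins : (insert x A).card ∈ Q := by
    refine ⟨insert x A, ?_, ?_, rfl⟩
    · intro y hy
      rcases Finset.mem_coe.mp hy |> Finset.mem_insert.mp with h | h
      · exact h ▸ hx
      · exact hA1 h
    · intro a ha b hb hab
      simp only [Finset.coe_insert, Set.mem_insert_iff, Finset.mem_coe] at ha hb
      rcases ha with rfl | ha <;> rcases hb with rfl | hb
      · exact absurd rfl hab
      · exact hcon b hb
      · rw [dist_comm]; exact hcon a ha
      · exact hA2 ha hb hab
    
  have : (insert x A).card ≤ sSup Q := le_csSup hQbdd hins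
  rw [Finset.card_insert_of_notMem hxA, hA3] at this
  omega

lemma sum_choose_le_exp (m K : ℕ) (hK1 : 1 ≤ K) (hKm : K ≤ m) :
    (∑ k ∈ Finset.range (K+1), (m.choose k : ℝ)) ≤ (Real.exp 1 * m / K) ^ K := by
  have hm0 : 0 < (m:ℝ) := by
    have : 1 ≤ m := le_trans hK1 hKm
    exact_mod_cast this
  set t : ℝ := K / m with ht
  have ht0 : 0 < t := by positivity
  have ht1 : t ≤ 1 := by
    rw [ht, div_le_one hm0]; exact_mod_cast hKm
  have h1 : (∑ k ∈ Finset.range (K+1), (m.choose k : ℝ)) * t ^ K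
      ≤ ∑ k ∈ Finset.range (K+1), (m.choose k : ℝ) * t ^ k := by
    rw [Finset.sum_mul]
    apply Finset.sum_le_sum
    intro k hk
    have hkK : k ≤ K := Nat.lt_succ_iff.mp (Finset.mem_range.mp hk)
    have : t ^ K ≤ t ^ k := pow_le_pow_of_le_one ht0.le ht1 hkK
    have hc : (0:ℝ) ≤ (m.choose k : ℝ) := by positivity
    nlinarith
  have h2 : (∑ k ∈ Finset.range (K+1), (m.choose k : ℝ) * t ^ k)
      ≤ ∑ k ∈ Finset.range (m+1), (m.choose k : ℝ) * t ^ k := by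
    apply Finset.sum_le_sum_of_subset_of_nonneg
    · exact Finset.range_subset_range.mpr (by omega)
    · intro k _ _; positivity
  have h3 : (∑ k ∈ Finset.range (m+1), (m.choose k : ℝ) * t ^ k) = (1 + t) ^ m := by
    rw [add_comm (1:ℝ) t, add_pow]
    apply Finset.sum_congr rfl
    intro k _
    simp [mul_comm, mul_assoc]
  have h4 : (1 + t) ^ m ≤ Real.exp K := by
    calc (1 + t) ^ m ≤ (Real.exp t) ^ m := by
          apply pow_le_pow_left₀ (by linarith)
          linarith [Real.add_one_le_exp t]
      _ = Real.exp (t * m) := by rw [← Real.exp_nat_mul]; ring_nf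
      _ = Real.exp K := by rw [ht]; congr 1; field_simp
  have h5 : (∑ k ∈ Finset.range (K+1), (m.choose k : ℝ)) * t ^ K ≤ Real.exp K := by
    linarith
  have htK : (0:ℝ) < t ^ K := by positivity
  rw [← le_div_iff₀ htK] at h5
  calc (∑ k ∈ Finset.range (K+1), (m.choose k : ℝ)) ≤ Real.exp K / t ^ K := h5
    _ = (Real.exp 1 * m / K) ^ K := by
        rw [ht, div_pow (K:ℝ), div_pow (Real.exp 1 * m), mul_pow, Real.exp_one_pow]
        have hKK : ((K:ℝ))^K ≠ 0 := by positivity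
        have hmm : ((m:ℝ))^K ≠ 0 := by positivity
        field_simp

set_option maxHeartbeats 2000000

/-- (Lemma 4.7: covering numbers of weighted-sparse sets.) There is
a universal constant `C > 0` such that for any `m`-dimensional space `V_m` spanned by
basis functions `B_j`, `j ∈ S`, any `1 ≤ s ≤ m` and any radius `r ∈ (0,1]`, the
normalized set `U(M_{ω,s} ∩ V_m)` admits a `‖·‖_{w,∞}`-covering by `N` balls of radius
`r`, centered in the set, with `N ≤ (C m/(r √s))^s`. -/
theorem weighted_sparse_covering_number :
    ∃ C : ℝ, 0 < C ∧
      ∀ (Y : Type) [MeasurableSpace Y] (ρ : Measure Y) [IsProbabilityMeasure ρ]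
        (B : ℕ → Y → ℝ), (∀ j, Measurable (B j)) →
        (∀ i j, ∫ y, B i y * B j y ∂ρ = if i = j then 1 else 0) →
        ∀ w : Y → ℝ, Measurable w → (∀ y, 0 < w y) → (∫ y, (w y)⁻¹ ∂ρ = 1) →
        ∀ ω : ℕ → ℝ, (∀ j, 0 ≤ ω j) →
        (∀ j, essSup (fun y => ENNReal.ofReal (w y * B j y ^ 2)) ρ ≤
          ENNReal.ofReal (ω j ^ 2)) →
        ∀ (S : Finset ℕ) (m : ℕ), S.card = m →
        ∀ s : ℝ, 1 ≤ s → s ≤ (m : ℝ) →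
        ∀ r : ℝ, 0 < r → r ≤ 1 →
        -- UA is the normalized set U(M_{ω,s} ∩ V_m)
        ∀ UA : Set (Y → ℝ), UA = {f | ∃ c : ℕ → ℝ,
            (∀ j ∉ S, c j = 0) ∧ (∑ j ∈ S, c j ^ 2 = 1) ∧
            (∑ j ∈ S.filter (fun j => c j ≠ 0), ω j ^ 2 ≤ s) ∧
            f = fun y => ∑ j ∈ S, c j * B j y} →
          ∃ (N : ℕ) (cent : Fin N → Y → ℝ),
            (∀ i, cent i ∈ UA) ∧
            (∀ f ∈ UA, ∃ i,
              essSup (fun y => ENNReal.ofReal (w y * (f y - cent i y) ^ 2)) ρ <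
                ENNReal.ofReal (r ^ 2)) ∧
            (N : ℝ) ≤ (C * m / (r * Real.sqrt s)) ^ s := by
  refine ⟨33, by norm_num, ?_⟩
  intro Y _ ρ _ B hBmeas horth w hwmeas hwpos hwint ω hω hωB S m hSm s hs1 hsm r hr0 hr1 UA hUA
  subst hUA
  -- numerics
  have hm1 : (1:ℝ) ≤ m := le_trans hs1 hsm
  have hs0 : (0:ℝ) < s := lt_of_lt_of_le one_pos hs1
  have hsq1 : 1 ≤ Real.sqrt s := by
    rw [show (1:ℝ) = Real.sqrt 1 from (Real.sqrt_one).symm]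
    exact Real.sqrt_le_sqrt hs1
  have hsq0 : 0 < Real.sqrt s := lt_of_lt_of_le one_pos hsq1
  have hsqs : Real.sqrt s * Real.sqrt s = s := Real.mul_self_sqrt hs0.le
  set K := Nat.floor s with hK
  have hK1 : 1 ≤ K := Nat.le_floor (by exact_mod_cast hs1)
  have hKs : (K:ℝ) ≤ s := Nat.floor_le hs0.le
  have hKm : K ≤ m := by
    have : (K:ℝ) ≤ m := hKs.trans hsm
    exact_mod_cast this
  have hK0 : (0:ℝ) < K := by exact_mod_cast hK1
  have hs2K : s ≤ 2*K := by
    have h1 : s < K + 1 := Nat.lt_floor_add_one s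
    have h2 : (1:ℝ) ≤ K := by exact_mod_cast hK1
    linarith
  set ε := r / (2 * Real.sqrt s) with hε
  have hε0 : 0 < ε := by positivity
  have hε1 : ε ≤ 1 := by
    rw [hε, div_le_one (by positivity)]
    nlinarith
  have hεs : s * ε^2 = r^2/4 := by
    rw [hε, div_pow, mul_pow, Real.sq_sqrt hs0.le]
    field_simp
    ring
  -- ω_j ≥ 1
  have hω1 : ∀ j, (1:ℝ) ≤ ω j := by
    intro j
    have hBint : Integrable (fun y => B j y * B j y) ρ := by
      by_contra h
      have h2 := horth j j
      rw [integral_undef h] at h2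
      simp at h2
    have h1 : ∫⁻ y, ENNReal.ofReal (B j y * B j y) ∂ρ = 1 := by
      rw [← ofReal_integral_eq_lintegral_ofReal hBint
        (Filter.Eventually.of_forall fun y => mul_self_nonneg _), horth j j]
      simp
    have hwint' : Integrable (fun y => (w y)⁻¹) ρ := by
      by_contra h
      rw [integral_undef h] at hwint
      simp at hwint
    have h2 : ∫⁻ y, ENNReal.ofReal ((w y)⁻¹) ∂ρ = 1 := by
      rw [← ofReal_integral_eq_lintegral_ofReal hwint'
        (Filter.Eventually.of_forall fun y => (inv_nonneg.mpr (hwpos y).le)), hwint]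
      simp
    have h3 : (1:ℝ≥0∞) ≤ ENNReal.ofReal (ω j ^2) := by
      calc (1:ℝ≥0∞) = ∫⁻ y, ENNReal.ofReal (B j y * B j y) ∂ρ := h1.symm
        _ = ∫⁻ y, ENNReal.ofReal (w y * B j y ^2) * ENNReal.ofReal ((w y)⁻¹) ∂ρ := by
            apply lintegral_congr fun y => ?_
            rw [← ENNReal.ofReal_mul (by nlinarith [(hwpos y).le, sq_nonneg (B j y)])]
            congr 1
            field_simp [(hwpos y).ne']
        _ ≤ ∫⁻ y, ENNReal.ofReal (ω j ^2) * ENNReal.ofReal ((w y)⁻¹) ∂ρ := by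
            apply lintegral_mono_ae
            filter_upwards [ae_le_essSup (fun y => ENNReal.ofReal (w y * B j y ^2))] with y hy
            exact mul_le_mul_left (le_trans hy (hωB j)) _
        _ = ENNReal.ofReal (ω j ^2) * ∫⁻ y, ENNReal.ofReal ((w y)⁻¹) ∂ρ :=
            lintegral_const_mul' _ _ ENNReal.ofReal_ne_top
        _ = ENNReal.ofReal (ω j ^2) := by rw [h2, mul_one]
    have h4 : (1:ℝ) ≤ ω j ^ 2 := ENNReal.one_le_ofReal.mp h3
    nlinarith [hω j]
  -- a.e. domination
  have haeS : ∀ᵐ y ∂ρ, ∀ j, w y * B j y ^ 2 ≤ ω j ^ 2 := by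
    rw [ae_all_iff]
    intro j
    filter_upwards [ae_le_essSup (fun y => ENNReal.ofReal (w y * B j y ^2))] with y hy
    exact (ENNReal.ofReal_le_ofReal_iff (sq_nonneg _)).mp (le_trans hy (hωB j))
  have hdom : ∀ (T : Finset ℕ), T ⊆ S → ∀ d : ℕ → ℝ, (∀ j ∈ S, j ∉ T → d j = 0) →
      essSup (fun y => ENNReal.ofReal (w y * (∑ j ∈ S, d j * B j y)^2)) ρ ≤
        ENNReal.ofReal ((∑ j ∈ T, ω j ^2) * (∑ j ∈ T, d j ^2)) := by
    intro T hTS d hd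
    refine essSup_le_of_ae_le _ ?_
    filter_upwards [haeS] with y hy
    apply ENNReal.ofReal_le_ofReal
    have hsum : ∑ j ∈ S, d j * B j y = ∑ j ∈ T, d j * B j y :=
      (Finset.sum_subset hTS (fun j hjS hjT => by rw [hd j hjS hjT, zero_mul])).symm
    rw [hsum]
    have e0 : (∑ j ∈ T, d j * (Real.sqrt (w y) * B j y)) = Real.sqrt (w y) * ∑ j ∈ T, d j * B j y := by
      rw [Finset.mul_sum]
      exact Finset.sum_congr rfl fun j _ => by ring
    have e1 : w y * (∑ j ∈ T, d j * B j y)^2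
        = (∑ j ∈ T, d j * (Real.sqrt (w y) * B j y))^2 := by
      rw [e0, mul_pow, Real.sq_sqrt (hwpos y).le]
    have e2 := Finset.sum_mul_sq_le_sq_mul_sq T (fun j => d j)
      (fun j => Real.sqrt (w y) * B j y)
    have e3 : ∑ j ∈ T, (Real.sqrt (w y) * B j y)^2 ≤ ∑ j ∈ T, ω j^2 :=
      Finset.sum_le_sum fun j _ => by
        rw [mul_pow, Real.sq_sqrt (hwpos y).le]; exact hy j
    have hd2 : (0:ℝ) ≤ ∑ j ∈ T, d j ^2 := Finset.sum_nonneg fun j _ => sq_nonneg _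
    calc w y * (∑ j ∈ T, d j * B j y)^2
        = (∑ j ∈ T, d j * (Real.sqrt (w y) * B j y))^2 := e1
      _ ≤ (∑ j ∈ T, d j ^2) * ∑ j ∈ T, (Real.sqrt (w y) * B j y)^2 := e2
      _ ≤ (∑ j ∈ T, d j ^2) * ∑ j ∈ T, ω j^2 := mul_le_mul_of_nonneg_left e3 hd2
      _ = (∑ j ∈ T, ω j ^2) * (∑ j ∈ T, d j ^2) := mul_comm _ _
  -- nets on spheres
  have hnet : ∀ T : Finset ℕ, ∃ P : Finset (EuclideanSpace ℝ ↥T),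
      (↑P ⊆ sphere (0:EuclideanSpace ℝ ↥T) 1) ∧
      (∀ x ∈ sphere (0:EuclideanSpace ℝ ↥T) 1, ∃ p ∈ P, dist x p < ε) ∧
      (P.card : ℝ) ≤ (3/ε) ^ T.card := by
    intro T
    obtain ⟨P, h1, h2, h3⟩ := exists_sphere_net (volume : Measure (EuclideanSpace ℝ ↥T)) hε0 hε1
    exact ⟨P, h1, h2, by rwa [finrank_euclideanSpace, Fintype.card_coe] at h3⟩
  choose P hP1 hP2 hP3 using hnet
  set Ext : (T : Finset ℕ) → EuclideanSpace ℝ ↥T → ℕ → ℝ :=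
    fun T p j => if h : j ∈ T then p ⟨j, h⟩ else 0 with hExt
  set 𝒯 : Finset (Finset ℕ) := S.powerset.filter (fun T => ∑ j ∈ T, ω j^2 ≤ s) with h𝒯
  set Cf : Finset (Y → ℝ) := 𝒯.biUnion
    (fun T => (P T).image (fun p => fun y => ∑ j ∈ S, Ext T p j * B j y)) with hCf
  have hmem : ∀ g ∈ Cf, g ∈ {f | ∃ c : ℕ → ℝ,
      (∀ j ∉ S, c j = 0) ∧ (∑ j ∈ S, c j ^ 2 = 1) ∧
      (∑ j ∈ S.filter (fun j => c j ≠ 0), ω j ^ 2 ≤ s) ∧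
      f = fun y => ∑ j ∈ S, c j * B j y} := by
    intro g hg
    obtain ⟨T, hT𝒯, hgT⟩ := Finset.mem_biUnion.mp hg
    obtain ⟨p, hpP, rfl⟩ := Finset.mem_image.mp hgT
    have hTS : T ⊆ S := Finset.mem_powerset.mp (Finset.mem_filter.mp hT𝒯).1
    have hTs : ∑ j ∈ T, ω j ^2 ≤ s := (Finset.mem_filter.mp hT𝒯).2
    have hpS : ‖p‖ = 1 := mem_sphere_zero_iff_norm.mp (hP1 T hpP)
    have hnorm1 : ∑ i : ↥T, (p i)^2 = 1 := by
      have h := EuclideanSpace.norm_eq p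
      rw [hpS] at h
      have h2 : (1:ℝ)^2 = Real.sqrt (∑ i : ↥T, ‖p i‖^2)^2 := congrArg (fun t : ℝ => t^2) h
      rw [one_pow, Real.sq_sqrt (Finset.sum_nonneg fun i _ => sq_nonneg ‖p i‖)] at h2
      have h3 : ∑ i : ↥T, ‖p i‖^2 = ∑ i : ↥T, (p i)^2 :=
        Finset.sum_congr rfl fun i _ => by rw [Real.norm_eq_abs, sq_abs]
      rw [← h3, ← h2]
    refine ⟨Ext T p, ?_, ?_, ?_, rfl⟩
    · intro j hj
      simp only [hExt]
      rw [dif_neg (fun hjT => hj (hTS hjT))]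
    · calc ∑ j ∈ S, (Ext T p j)^2 = ∑ j ∈ T, (Ext T p j)^2 :=
          (Finset.sum_subset hTS fun j _ hjT => by simp [hExt, dif_neg hjT]).symm
        _ = ∑ i ∈ T.attach, (p i)^2 := by
            rw [← Finset.sum_attach T (fun j => (Ext T p j)^2)]
            exact Finset.sum_congr rfl fun i _ => by simp [hExt, dif_pos i.2]
        _ = 1 := by rw [← hnorm1, Finset.univ_eq_attach]
    · refine le_trans (Finset.sum_le_sum_of_subset_of_nonneg ?_ fun j _ _ => sq_nonneg _) hTs
      intro j hj
      rcases Finset.mem_filter.mp hj with ⟨hjS, hjne⟩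
      by_contra hjT
      exact hjne (by simp [hExt, dif_neg hjT])
  refine ⟨Cf.card, fun i => ((Cf.equivFin.symm i : { g // g ∈ Cf }) : Y → ℝ), ?_, ?_, ?_⟩
  · intro i
    exact hmem _ (Cf.equivFin.symm i).2
  · -- covering
    rintro f ⟨c, hc0, hc1, hcs, rfl⟩
    set T₀ := S.filter (fun j => c j ≠ 0) with hT₀
    have hT₀S : T₀ ⊆ S := Finset.filter_subset _ _
    have hT₀𝒯 : T₀ ∈ 𝒯 := Finset.mem_filter.mpr ⟨Finset.mem_powerset.mpr hT₀S, hcs⟩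
    set x : EuclideanSpace ℝ ↥T₀ := WithLp.toLp 2 (fun i => c i) with hx
    have hsum10 : ∑ j ∈ T₀, (c j)^2 = 1 := by
      rw [← hc1]
      exact Finset.sum_subset hT₀S fun j hjS hjT => by
        have : c j = 0 := by
          by_contra h
          exact hjT (Finset.mem_filter.mpr ⟨hjS, h⟩)
        simp [this]
    have hxnorm : ‖x‖ = 1 := by
      rw [EuclideanSpace.norm_eq]
      have h2 : ∑ i : ↥T₀, ‖x i‖^2 = 1 := by
        rw [Finset.univ_eq_attach]
        calc ∑ i ∈ T₀.attach, ‖x i‖^2 = ∑ i ∈ T₀.attach, (c ↑i)^2 := by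
              exact Finset.sum_congr rfl fun i _ => by simp [hx, sq_abs, Real.norm_eq_abs]
          _ = ∑ j ∈ T₀, (c j)^2 := Finset.sum_attach T₀ (fun j => (c j)^2)
          _ = 1 := hsum10
      rw [h2, Real.sqrt_one]
    obtain ⟨p, hpP, hdist⟩ := hP2 T₀ x (mem_sphere_zero_iff_norm.mpr hxnorm)
    have hgC : (fun y => ∑ j ∈ S, Ext T₀ p j * B j y) ∈ Cf :=
      Finset.mem_biUnion.mpr ⟨T₀, hT₀𝒯, Finset.mem_image_of_mem _ hpP⟩
    refine ⟨Cf.equivFin ⟨_, hgC⟩, ?_⟩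
    have hgoal : essSup (fun y => ENNReal.ofReal
        (w y * ((∑ j ∈ S, c j * B j y) - ∑ j ∈ S, Ext T₀ p j * B j y)^2)) ρ <
        ENNReal.ofReal (r^2) := ?_
    · simpa only [Equiv.symm_apply_apply] using hgoal
    set d : ℕ → ℝ := fun j => c j - Ext T₀ p j with hd
    have hdsupp : ∀ j ∈ S, j ∉ T₀ → d j = 0 := by
      intro j hjS hjT
      have hc : c j = 0 := by
        by_contra h
        exact hjT (Finset.mem_filter.mpr ⟨hjS, h⟩)
      simp [hd, hExt, dif_neg hjT, hc]
    have hdsum : ∑ j ∈ T₀, d j ^2 < ε^2 := by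
      have hdist2 : dist x p ^ 2 < ε^2 := by
        nlinarith [dist_nonneg (x := x) (y := p)]
      rw [EuclideanSpace.dist_eq, Real.sq_sqrt
        (Finset.sum_nonneg fun i _ => sq_nonneg _)] at hdist2
      calc ∑ j ∈ T₀, d j^2 = ∑ i ∈ T₀.attach, d ↑i ^2 :=
            (Finset.sum_attach T₀ (fun j => d j ^2)).symm
        _ = ∑ i : ↥T₀, dist (x i) (p i)^2 := by
            rw [Finset.univ_eq_attach]
            refine Finset.sum_congr rfl fun i _ => ?_
            rw [Real.dist_eq, sq_abs]
            simp [hd, hExt, dif_pos i.2, hx]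
        _ < ε^2 := hdist2
    have hdiffeq : ∀ y, (∑ j ∈ S, c j * B j y) - (∑ j ∈ S, Ext T₀ p j * B j y)
        = ∑ j ∈ S, d j * B j y := by
      intro y
      rw [← Finset.sum_sub_distrib]
      exact Finset.sum_congr rfl fun j _ => by simp [hd]; ring
    have hωT : ∑ j ∈ T₀, ω j^2 ≤ s := hcs
    have hd2nn : (0:ℝ) ≤ ∑ j ∈ T₀, d j^2 := Finset.sum_nonneg fun j _ => sq_nonneg _
    calc essSup (fun y => ENNReal.ofReal
          (w y * ((∑ j ∈ S, c j * B j y) - ∑ j ∈ S, Ext T₀ p j * B j y)^2)) ρ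
        = essSup (fun y => ENNReal.ofReal (w y * (∑ j ∈ S, d j * B j y)^2)) ρ := by
          apply essSup_congr_ae
          filter_upwards with y
          rw [hdiffeq y]
      _ ≤ ENNReal.ofReal ((∑ j ∈ T₀, ω j ^2) * (∑ j ∈ T₀, d j ^2)) := hdom T₀ hT₀S d hdsupp
      _ < ENNReal.ofReal (r^2) := by
          rw [ENNReal.ofReal_lt_ofReal_iff (by positivity)]
          have hA := mul_le_mul_of_nonneg_right hωT hd2nn
          have hB := mul_lt_mul_of_pos_left hdsum hs0
          have hC : (0:ℝ) < r^2 := by positivity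
          linarith [hA, hB, hC, hεs]
  · -- cardinality bound
    have hcard1 : Cf.card ≤ ∑ T ∈ 𝒯, (P T).card := by
      rw [hCf]
      exact le_trans Finset.card_biUnion_le
        (Finset.sum_le_sum fun T _ => Finset.card_image_le)
    clear hmem hCf
    clear_value Cf Ext
    have hTcard : ∀ T ∈ 𝒯, T.card ≤ K := by
      intro T hT
      rcases Finset.mem_filter.mp hT with ⟨_, hTs⟩
      have h1 : (T.card : ℝ) ≤ ∑ j ∈ T, ω j^2 := by
        calc (T.card:ℝ) = ∑ _j ∈ T, (1:ℝ) := by simp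
          _ ≤ ∑ j ∈ T, ω j^2 := Finset.sum_le_sum fun j _ =>
              one_le_pow₀ (hω1 j)
      exact Nat.le_floor (le_trans h1 hTs)
    have h3ε : (1:ℝ) ≤ 3/ε := by
      rw [le_div_iff₀ hε0]; linarith
    have hPbound : ∀ T ∈ 𝒯, ((P T).card : ℝ) ≤ (3/ε)^K := fun T hT =>
      le_trans (hP3 T) (pow_le_pow_right₀ h3ε (hTcard T hT))
    have h𝒯card : (𝒯.card : ℝ) ≤ ∑ k ∈ Finset.range (K+1), (m.choose k : ℝ) := by
      have hsub : 𝒯 ⊆ (Finset.range (K+1)).biUnion (fun k => Finset.powersetCard k S) := by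
        intro T hT
        refine Finset.mem_biUnion.mpr ⟨T.card,
          Finset.mem_range.mpr (Nat.lt_succ_of_le (hTcard T hT)), ?_⟩
        exact Finset.mem_powersetCard.mpr
          ⟨Finset.mem_powerset.mp (Finset.mem_filter.mp hT).1, rfl⟩
      have h1 : 𝒯.card ≤ ∑ k ∈ Finset.range (K+1), (Finset.powersetCard k S).card :=
        le_trans (Finset.card_le_card hsub) Finset.card_biUnion_le
      have h2 : ∑ k ∈ Finset.range (K+1), (Finset.powersetCard k S).card
          = ∑ k ∈ Finset.range (K+1), m.choose k := by
        refine Finset.sum_congr rfl fun k _ => ?_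
        rw [Finset.card_powersetCard, hSm]
      rw [h2] at h1
      exact_mod_cast h1
    have hchain : (Cf.card : ℝ) ≤ ((Real.exp 1 * m / K) * (3/ε))^K := by
      calc (Cf.card:ℝ) ≤ ∑ T ∈ 𝒯, ((P T).card:ℝ) := by exact_mod_cast hcard1
        _ ≤ ∑ _T ∈ 𝒯, (3/ε)^K := Finset.sum_le_sum hPbound
        _ = 𝒯.card * (3/ε)^K := by rw [Finset.sum_const, nsmul_eq_mul]
        _ ≤ (∑ k ∈ Finset.range (K+1), (m.choose k:ℝ)) * (3/ε)^K :=
            mul_le_mul_of_nonneg_right h𝒯card (by positivity)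
        _ ≤ (Real.exp 1 * m / K)^K * (3/ε)^K :=
            mul_le_mul_of_nonneg_right (sum_choose_le_exp m K hK1 hKm) (by positivity)
        _ = ((Real.exp 1 * m / K) * (3/ε))^K := (mul_pow _ _ _).symm
    have hbase : (Real.exp 1 * m / K) * (3/ε) ≤ 33 * m / (r * Real.sqrt s) := by
      have hεval : (3:ℝ)/ε = 6 * Real.sqrt s / r := by
        rw [hε]
        field_simp
        ring
      rw [hεval, div_mul_div_comm, div_le_div_iff₀ (by positivity) (by positivity)]
      have he : Real.exp 1 < 2.7182818286 := Real.exp_one_lt_d9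
      have hm0 : (0:ℝ) < m := by linarith
      have hkey : 6 * Real.exp 1 * s ≤ 33 * K := by
        have h1 : 6*s*Real.exp 1 ≤ 6*s*2.7182818286 :=
          mul_le_mul_of_nonneg_left he.le (by positivity)
        have h2 : (0:ℝ) ≤ K := hK0.le
        linarith
      calc Real.exp 1 * ↑m * (6 * Real.sqrt s) * (r * Real.sqrt s)
          = (6 * Real.exp 1 * s) * (m * r) := by
            linear_combination 6 * Real.exp 1 * ↑m * r * hsqs
        _ ≤ (33 * K) * (m * r) :=
            mul_le_mul_of_nonneg_right hkey (by positivity)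
        _ = 33 * ↑m * (↑K * r) := by ring
    have hx1 : (1:ℝ) ≤ 33 * m / (r * Real.sqrt s) := by
      rw [le_div_iff₀ (by positivity)]
      have h1 : (1:ℝ) * Real.sqrt s ≤ Real.sqrt s * Real.sqrt s :=
        mul_le_mul_of_nonneg_right hsq1 hsq0.le
      have h2 : r * Real.sqrt s ≤ 1 * Real.sqrt s :=
        mul_le_mul_of_nonneg_right hr1 hsq0.le
      linarith [hsqs, hsm, hm1]
    calc (Cf.card : ℝ) ≤ ((Real.exp 1 * m / K) * (3/ε))^K := hchain
      _ ≤ (33 * m / (r * Real.sqrt s))^K :=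
          pow_le_pow_left₀ (by positivity) hbase K
      _ = (33 * m / (r * Real.sqrt s))^((K:ℕ):ℝ) := (Real.rpow_natCast _ K).symm
      _ ≤ (33 * m / (r * Real.sqrt s))^s := Real.rpow_le_rpow_of_exponent_le hx1 hKs
end

section
/- There exist universal constants C₁, C₂ > 0 with the following property. Let S ⊆ ℕ be finite with |S| = m, V_m := span{B_j : j ∈ S}, and let y_1,…,y_n be i.i.d. samples with distribution μ := w^{-1}·ρ. Then for every s with 1 ≤ s ≤ m and every δ ∈ (0,1], the probability that RIP(M_{ω,s} ∩ V_m, δ) fails is at most C₁ (C₂ m/δ)^s exp(−(n/2)(δ/s)²). -/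
open MeasureTheory ENNReal
open scoped Classical

open scoped NNReal

open MeasureTheory ENNReal
open scoped Classical

lemma my_lintegral_pi_prod {Y : Type} [MeasurableSpace Y] (μ : Measure Y) [IsProbabilityMeasure μ]
    (f : Y → ℝ≥0∞) (hf : Measurable f) :
    ∀ n : ℕ, ∫⁻ x : Fin n → Y, ∏ i, f (x i) ∂Measure.pi (fun _ => μ) = (∫⁻ y, f y ∂μ) ^ n := by
  intro n
  induction n with
  | zero => simp
  | succ n ih =>
    have hmp := (measurePreserving_piFinSuccAbove (fun _ : Fin (n+1) => μ) 0)
    have hmeas2 : Measurable fun z : Y × (Fin n → Y) => f z.1 * ∏ i, f (z.2 i) :=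
      (hf.comp measurable_fst).mul
        ((Finset.measurable_prod _ (fun i _ => hf.comp (measurable_pi_apply i))).comp
          measurable_snd)
    have key : ∀ x : Fin (n+1) → Y,
        (∏ i, f (x i)) = (fun z : Y × (Fin n → Y) => f z.1 * ∏ i, f (z.2 i))
          ((MeasurableEquiv.piFinSuccAbove (fun _ => Y) 0) x) := by
      intro x
      simp [MeasurableEquiv.piFinSuccAbove, Fin.prod_univ_succ, Fin.removeNth, Fin.tail,
        Fin.succAbove_zero]
    calc ∫⁻ x : Fin (n+1) → Y, ∏ i, f (x i) ∂Measure.pi (fun _ => μ)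
        = ∫⁻ z, f z.1 * ∏ i, f (z.2 i) ∂(μ.prod (Measure.pi (fun _ : Fin n => μ))) := by
          rw [← hmp.lintegral_comp hmeas2]
          exact lintegral_congr key
      _ = (∫⁻ y, f y ∂μ) * ∫⁻ x : Fin n → Y, ∏ i, f (x i) ∂Measure.pi (fun _ => μ) :=
          lintegral_prod_mul hf.aemeasurable
            (Finset.measurable_prod _ (fun i _ => hf.comp (measurable_pi_apply i))).aemeasurable
      _ = (∫⁻ y, f y ∂μ) ^ (n+1) := by rw [ih, pow_succ]; ring

lemma my_chernoff_tail {Y : Type} [MeasurableSpace Y] (μ : Measure Y) [IsProbabilityMeasure μ]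
    (Z : Y → ℝ) (hZ : Measurable Z) (b t : ℝ) (hb : 0 < b)
    (hbd : ∀ᵐ y ∂μ, |Z y| ≤ b) (hmean : (∫ y, Z y ∂μ) = 0)
    (hvar : (∫ y, Z y ^ 2 ∂μ) ≤ b ^ 2 / 4)
    (ht : 0 < t) (htb : t ≤ b) (n : ℕ) :
    Measure.pi (fun _ : Fin n => μ) {x | (n : ℝ) * t ≤ ∑ i, Z (x i)} ≤
      ENNReal.ofReal (Real.exp (-(13 / 16) * n * (t / b) ^ 2)) := by
  set l : ℝ := t / b ^ 2 with hl_def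
  have hl : 0 < l := by positivity
  have hlb : l * b ≤ 1 := by
    rw [hl_def]
    rw [div_mul_eq_mul_div, div_le_one (by positivity)]
    nlinarith
  -- pointwise Taylor bound
  have hpt : ∀ᵐ y ∂μ, Real.exp (l * Z y) ≤ 1 + l * Z y + 3 / 4 * (l * Z y) ^ 2 := by
    filter_upwards [hbd] with y hy
    have hx : |l * Z y| ≤ 1 := by
      rw [abs_mul, abs_of_pos hl]
      calc l * |Z y| ≤ l * b := by nlinarith
        _ ≤ 1 := hlb
    have h2 := Real.exp_bound hx (by norm_num : 0 < 2)
    have : |Real.exp (l * Z y) - (1 + l * Z y)| ≤ |l * Z y| ^ 2 * (3 / 4) := by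
      convert h2 using 2
      · simp [Finset.sum_range_succ]
      · norm_num [Nat.factorial]
    rw [abs_le] at this
    have := this.2
    rw [sq_abs] at this
    nlinarith
  -- integrability
  have hZint : Integrable Z μ := by
    refine Integrable.mono' (integrable_const b) hZ.aestronglyMeasurable ?_
    filter_upwards [hbd] with y hy using by simpa using hy
  have hZ2int : Integrable (fun y => Z y ^ 2) μ := by
    refine Integrable.mono' (integrable_const (b ^ 2)) (hZ.pow_const 2).aestronglyMeasurable ?_
    filter_upwards [hbd] with y hy
    rw [Real.norm_eq_abs, abs_pow, sq_abs]
    nlinarith [sq_abs (Z y), abs_nonneg (Z y)]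
  have hexpint : Integrable (fun y => Real.exp (l * Z y)) μ := by
    refine Integrable.mono' (integrable_const (Real.exp (l * b)))
      (Real.measurable_exp.comp (hZ.const_mul l)).aestronglyMeasurable ?_
    filter_upwards [hbd] with y hy
    rw [Real.norm_eq_abs, abs_of_pos (Real.exp_pos _)]
    apply Real.exp_le_exp.2
    nlinarith [neg_abs_le (Z y), le_abs_self (Z y)]
  -- mgf bound
  have hKbound : (∫ y, Real.exp (l * Z y) ∂μ) ≤ 1 + 3 / 16 * l ^ 2 * b ^ 2 := by
    have h1 : Integrable (fun y => 1 + l * Z y) μ :=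
      (integrable_const 1).add (hZint.const_mul l)
    have h2 : Integrable (fun y => 3 / 4 * l ^ 2 * Z y ^ 2) μ := hZ2int.const_mul _
    have e1 : (fun y => 1 + l * Z y + 3 / 4 * (l * Z y) ^ 2)
        = fun y => (1 + l * Z y) + 3 / 4 * l ^ 2 * Z y ^ 2 := by
      funext y; ring
    have hrhsint : Integrable (fun y => 1 + l * Z y + 3 / 4 * (l * Z y) ^ 2) μ := by
      rw [e1]; exact h1.add h2
    have hIa : (∫ y, (1 + l * Z y) + 3 / 4 * l ^ 2 * Z y ^ 2 ∂μ)
        = (∫ y, 1 + l * Z y ∂μ) + ∫ y, 3 / 4 * l ^ 2 * Z y ^ 2 ∂μ := integral_add h1 h2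
    have hIb : (∫ y, 1 + l * Z y ∂μ) = 1 + l * ∫ y, Z y ∂μ := by
      rw [integral_add (integrable_const 1) (hZint.const_mul l), integral_const,
        integral_const_mul]
      simp
    have hIc : (∫ y, 3 / 4 * l ^ 2 * Z y ^ 2 ∂μ) = 3 / 4 * l ^ 2 * ∫ y, Z y ^ 2 ∂μ :=
      integral_const_mul _ _
    calc (∫ y, Real.exp (l * Z y) ∂μ) ≤ ∫ y, 1 + l * Z y + 3 / 4 * (l * Z y) ^ 2 ∂μ :=
          integral_mono_ae hexpint hrhsint hpt
      _ = 1 + l * (∫ y, Z y ∂μ) + 3 / 4 * l ^ 2 * (∫ y, Z y ^ 2 ∂μ) := by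
          rw [e1, hIa, hIb, hIc]
      _ ≤ 1 + 3 / 16 * l ^ 2 * b ^ 2 := by rw [hmean]; nlinarith [sq_nonneg l]
  have hK1 : (∫ y, Real.exp (l * Z y) ∂μ) ≤ Real.exp (3 / 16 * l ^ 2 * b ^ 2) := by
    calc (∫ y, Real.exp (l * Z y) ∂μ) ≤ 1 + 3 / 16 * l ^ 2 * b ^ 2 := hKbound
      _ ≤ Real.exp (3 / 16 * l ^ 2 * b ^ 2) := by
          have := Real.add_one_le_exp (3 / 16 * l ^ 2 * b ^ 2); linarith
  have hlin : (∫⁻ y, ENNReal.ofReal (Real.exp (l * Z y)) ∂μ) ≤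
      ENNReal.ofReal (Real.exp (3 / 16 * l ^ 2 * b ^ 2)) := by
    rw [← ofReal_integral_eq_lintegral_ofReal hexpint
      (ae_of_all _ (fun y => (Real.exp_pos _).le))]
    exact ENNReal.ofReal_le_ofReal hK1
  -- product bound
  have hfmeas : Measurable fun y => ENNReal.ofReal (Real.exp (l * Z y)) :=
    (Real.measurable_exp.comp (hZ.const_mul l)).ennreal_ofReal
  have hFmeas : Measurable fun x : Fin n → Y => ENNReal.ofReal (Real.exp (l * ∑ i, Z (x i))) := by
    apply Measurable.ennreal_ofReal
    exact Real.measurable_exp.comp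
      ((Finset.measurable_sum _ (fun i _ => hZ.comp (measurable_pi_apply i))).const_mul l)
  have hFint : (∫⁻ x : Fin n → Y, ENNReal.ofReal (Real.exp (l * ∑ i, Z (x i)))
      ∂Measure.pi (fun _ => μ)) ≤ ENNReal.ofReal (Real.exp (3 / 16 * l ^ 2 * b ^ 2)) ^ n := by
    have heq : ∀ x : Fin n → Y, ENNReal.ofReal (Real.exp (l * ∑ i, Z (x i)))
        = ∏ i, ENNReal.ofReal (Real.exp (l * Z (x i))) := by
      intro x
      rw [Finset.mul_sum, Real.exp_sum, ENNReal.ofReal_prod_of_nonneg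
        (fun i _ => (Real.exp_pos _).le)]
    calc (∫⁻ x : Fin n → Y, ENNReal.ofReal (Real.exp (l * ∑ i, Z (x i)))
          ∂Measure.pi (fun _ => μ))
        = (∫⁻ y, ENNReal.ofReal (Real.exp (l * Z y)) ∂μ) ^ n := by
          rw [← my_lintegral_pi_prod μ _ hfmeas n]; exact lintegral_congr heq
      _ ≤ ENNReal.ofReal (Real.exp (3 / 16 * l ^ 2 * b ^ 2)) ^ n := pow_le_pow_left' hlin n
  -- Markov
  have hsub : {x : Fin n → Y | (n : ℝ) * t ≤ ∑ i, Z (x i)} ⊆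
      {x : Fin n → Y | ENNReal.ofReal (Real.exp (l * ((n : ℝ) * t))) ≤
        ENNReal.ofReal (Real.exp (l * ∑ i, Z (x i)))} := by
    intro x hx
    simp only [Set.mem_setOf_eq] at hx ⊢
    exact ENNReal.ofReal_le_ofReal (Real.exp_le_exp.2 (by nlinarith))
  calc Measure.pi (fun _ : Fin n => μ) {x | (n : ℝ) * t ≤ ∑ i, Z (x i)}
      ≤ Measure.pi (fun _ : Fin n => μ)
        {x : Fin n → Y | ENNReal.ofReal (Real.exp (l * ((n : ℝ) * t))) ≤
          ENNReal.ofReal (Real.exp (l * ∑ i, Z (x i)))} := measure_mono hsub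
    _ ≤ (∫⁻ x : Fin n → Y, ENNReal.ofReal (Real.exp (l * ∑ i, Z (x i)))
          ∂Measure.pi (fun _ => μ)) / ENNReal.ofReal (Real.exp (l * ((n : ℝ) * t))) :=
        meas_ge_le_lintegral_div hFmeas.aemeasurable
          (by simp [Real.exp_pos]) ENNReal.ofReal_ne_top
    _ ≤ ENNReal.ofReal (Real.exp (3 / 16 * l ^ 2 * b ^ 2)) ^ n /
          ENNReal.ofReal (Real.exp (l * ((n : ℝ) * t))) := by
        exact ENNReal.div_le_div_right hFint _
    _ = ENNReal.ofReal (Real.exp (-(13 / 16) * n * (t / b) ^ 2)) := by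
        rw [← ENNReal.ofReal_pow (Real.exp_pos _).le, ← Real.exp_nat_mul,
          ← ENNReal.ofReal_div_of_pos (Real.exp_pos _), ← Real.exp_sub]
        congr 1
        rw [hl_def]
        field_simp
        ring

lemma my_sphere_net (ι : Type) [Fintype ι] [Nonempty ι] (θ : ℝ) (hθ : 0 < θ) :
    ∃ Net : Finset (EuclideanSpace ℝ ι),
      (∀ u ∈ Net, ‖u‖ = 1) ∧
      (∀ v : EuclideanSpace ℝ ι, ‖v‖ = 1 → ∃ u ∈ Net, dist v u ≤ θ) ∧
      (Net.card : ℝ) ≤ (1 + 2 / θ) ^ (Fintype.card ι) := by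
  classical
  set E := EuclideanSpace ℝ ι
  haveI : Nontrivial E := by
    refine ⟨EuclideanSpace.single (Classical.arbitrary ι) (1 : ℝ), 0, fun h => ?_⟩
    have h1 : (EuclideanSpace.single (Classical.arbitrary ι) (1 : ℝ) : E) (Classical.arbitrary ι)
        = (0 : E) (Classical.arbitrary ι) := by rw [h]
    rw [PiLp.zero_apply, EuclideanSpace.single_apply, if_pos rfl] at h1
    exact one_ne_zero h1
  set d := Fintype.card ι with hd
  have hfinrank : Module.finrank ℝ E = d := finrank_euclideanSpace
  set V := volume (Metric.ball (0 : E) 1) with hV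
  have hV0 : V ≠ 0 := (Metric.measure_ball_pos volume 0 one_pos).ne'
  have hVtop : V ≠ ⊤ := measure_ball_lt_top.ne
  -- cardinality bound for separated sets of the sphere
  have hcard : ∀ P : Finset E, (∀ u ∈ P, ‖u‖ = 1) →
      (∀ u ∈ P, ∀ v ∈ P, u ≠ v → θ < dist u v) → (P.card : ℝ) ≤ (1 + 2 / θ) ^ d := by
    intro P hunit hsep
    have hdisj : (P : Set E).PairwiseDisjoint (fun x => Metric.ball x (θ / 2)) := by
      intro u hu v hv huv
      exact Metric.ball_disjoint_ball (by
        have := hsep u (by exact_mod_cast hu) v (by exact_mod_cast hv) huv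
        linarith)
    have hsub : ∀ u ∈ P, Metric.ball u (θ / 2) ⊆ Metric.ball (0 : E) (1 + θ / 2) := by
      intro u hu
      refine Metric.ball_subset_ball' ?_
      have : dist u 0 = 1 := by rw [dist_zero_right, hunit u hu]
      linarith
    have hvol : (P.card : ℝ≥0∞) * (ENNReal.ofReal ((θ / 2) ^ d) * V) ≤
        ENNReal.ofReal ((1 + θ / 2) ^ d) * V := by
      calc (P.card : ℝ≥0∞) * (ENNReal.ofReal ((θ / 2) ^ d) * V)
          = ∑ u ∈ P, volume (Metric.ball u (θ / 2)) := by
            rw [Finset.sum_congr rfl (fun u _ => ?_), Finset.sum_const, nsmul_eq_mul]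
            rw [Measure.addHaar_ball volume u (by linarith : (0:ℝ) ≤ θ / 2), hfinrank]
        _ = volume (⋃ u ∈ P, Metric.ball u (θ / 2)) :=
            (measure_biUnion_finset hdisj (fun u _ => measurableSet_ball)).symm
        _ ≤ volume (Metric.ball (0 : E) (1 + θ / 2)) :=
            measure_mono (Set.iUnion₂_subset hsub)
        _ = ENNReal.ofReal ((1 + θ / 2) ^ d) * V := by
            rw [Measure.addHaar_ball volume _ (by linarith : (0:ℝ) ≤ 1 + θ / 2), hfinrank]
    have hvol2 : (P.card : ℝ≥0∞) * ENNReal.ofReal ((θ / 2) ^ d) ≤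
        ENNReal.ofReal ((1 + θ / 2) ^ d) := by
      rw [← mul_assoc] at hvol
      exact (ENNReal.mul_le_mul_iff_left hV0 hVtop).1 hvol
    have hreal : (P.card : ℝ) * (θ / 2) ^ d ≤ (1 + θ / 2) ^ d := by
      have := hvol2
      rw [show ((P.card : ℝ≥0∞)) = ENNReal.ofReal (P.card : ℝ) by simp,
        ← ENNReal.ofReal_mul (by positivity)] at this
      exact (ENNReal.ofReal_le_ofReal_iff (by positivity)).1 this
    have hpow : (0:ℝ) < (θ / 2) ^ d := by positivity
    rw [← le_div_iff₀ hpow] at hreal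
    calc (P.card : ℝ) ≤ (1 + θ / 2) ^ d / (θ / 2) ^ d := hreal
      _ = (1 + 2 / θ) ^ d := by
          rw [← div_pow]
          congr 1
          field_simp
          ring
  -- maximal separated set
  set Pprop : ℕ → Prop := fun c => ∃ P : Finset E, (∀ u ∈ P, ‖u‖ = 1) ∧
      (∀ u ∈ P, ∀ v ∈ P, u ≠ v → θ < dist u v) ∧ P.card = c with hPprop
  set K := Nat.floor ((1 + 2 / θ) ^ d) with hK
  have hcardK : ∀ P : Finset E, (∀ u ∈ P, ‖u‖ = 1) →
      (∀ u ∈ P, ∀ v ∈ P, u ≠ v → θ < dist u v) → P.card ≤ K :=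
    fun P h1 h2 => Nat.le_floor (hcard P h1 h2)
  have h0 : Pprop 0 := ⟨∅, by simp, by simp, rfl⟩
  have hM : Pprop (Nat.findGreatest Pprop K) := Nat.findGreatest_spec (Nat.zero_le K) h0
  obtain ⟨P, hunit, hsep, hcardP⟩ := hM
  refine ⟨P, hunit, ?_, le_trans (hcard P hunit hsep) le_rfl⟩
  intro v hv
  by_contra hcov
  push_neg at hcov
  have hvP : v ∉ P := fun hvP => by
    have := hcov v hvP
    simp at this
    linarith
  set P' := insert v P with hP'
  have hunit' : ∀ u ∈ P', ‖u‖ = 1 := by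
    intro u hu
    rcases Finset.mem_insert.1 hu with h | h
    · rw [h]; exact hv
    · exact hunit u h
  have hsep' : ∀ u ∈ P', ∀ x ∈ P', u ≠ x → θ < dist u x := by
    intro u hu x hx hux
    rcases Finset.mem_insert.1 hu with h | h <;> rcases Finset.mem_insert.1 hx with h' | h'
    · exact absurd (h.trans h'.symm) hux
    · rw [h]; exact hcov x h'
    · rw [h', dist_comm]; exact hcov u h
    · exact hsep u h x h' hux
  have hcard' : P'.card = Nat.findGreatest Pprop K + 1 := by
    rw [hP', Finset.card_insert_of_notMem hvP, hcardP]
  have hK' : P'.card ≤ K := hcardK P' hunit' hsep'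
  have := Nat.findGreatest_is_greatest (by omega : Nat.findGreatest Pprop K < P'.card)
    (by omega : P'.card ≤ K)
  exact this ⟨P', hunit', hsep', rfl⟩


lemma my_rip_arith (δ a x bu M : ℝ) (hδ : 0 < δ) (hδ1 : δ ≤ 1)
    (ha0 : 0 ≤ a) (ha2 : a ^ 2 = 1 + 9 / 10 * δ)
    (hx : 0 ≤ x) (hbu : 0 ≤ bu) (hM : 0 ≤ M)
    (hMa : M * (1 - δ / 100) ≤ a) (hxM : x ≤ M) (hlow : bu - M * (δ / 100) ≤ x)
    (hbu1 : 1 - 9 / 10 * δ ≤ bu ^ 2) (hbu2 : bu ^ 2 ≤ 1 + 9 / 10 * δ) :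
    1 - δ ≤ x ^ 2 ∧ x ^ 2 - 1 ≤ δ := by
  have ha14 : a ≤ 14 / 10 := by nlinarith [sq_nonneg (a - 14 / 10)]
  have hMδ : M * (δ / 100) ≤ M * (1 / 100) :=
    mul_le_mul_of_nonneg_left (by linarith) hM
  have hM143 : M ≤ 143 / 100 := by nlinarith
  have hbu31 : (31 / 100 : ℝ) ≤ bu := by nlinarith
  have hbu14 : bu ≤ 14 / 10 := by nlinarith
  constructor
  · -- lower bound
    have hc : M * (δ / 100) ≤ 143 / 10000 * δ := by
      have := mul_le_mul_of_nonneg_right hM143 (by linarith : (0:ℝ) ≤ δ / 100)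
      linarith
    have hlow2 : bu - 143 / 10000 * δ ≤ x := by linarith
    have hpos : (0:ℝ) ≤ bu - 143 / 10000 * δ := by linarith
    have hsq : (bu - 143 / 10000 * δ) ^ 2 ≤ x ^ 2 := pow_le_pow_left₀ hpos hlow2 2
    have hexp : (bu - 143 / 10000 * δ) ^ 2
        = bu ^ 2 - 286 / 10000 * (δ * bu) + (143 / 10000) ^ 2 * δ ^ 2 := by ring
    have hp : δ * bu ≤ δ * (14 / 10) := mul_le_mul_of_nonneg_left hbu14 hδ.le
    have hδ2 : (0:ℝ) ≤ δ ^ 2 := sq_nonneg δ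
    linarith
  · -- upper bound
    have hδδ : δ * δ ≤ δ * 1 := mul_le_mul_of_nonneg_left hδ1 hδ.le
    have hδ3 : (0:ℝ) ≤ δ * δ * δ := by positivity
    have hP : (1 + 9 / 10 * δ) ≤ (1 + δ) * (1 - δ / 100) ^ 2 := by nlinarith
    have h1pos : (0:ℝ) < 1 - δ / 100 := by linarith
    have hMP : (M * (1 - δ / 100)) ^ 2 ≤ a ^ 2 :=
      pow_le_pow_left₀ (mul_nonneg hM h1pos.le) hMa 2
    have hx2 : x ^ 2 ≤ M ^ 2 := pow_le_pow_left₀ hx hxM 2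
    have hPpos : (0:ℝ) < (1 - δ / 100) ^ 2 := pow_pos h1pos 2
    have hMP' : M ^ 2 * (1 - δ / 100) ^ 2 ≤ 1 + 9 / 10 * δ := by
      have he : M ^ 2 * (1 - δ / 100) ^ 2 = (M * (1 - δ / 100)) ^ 2 := by ring
      rw [he, ← ha2]; exact hMP
    have h1 : M ^ 2 * (1 - δ / 100) ^ 2 ≤ (1 + δ) * (1 - δ / 100) ^ 2 := by linarith
    have hM2 : M ^ 2 ≤ 1 + δ := le_of_mul_le_mul_right h1 hPpos
    linarith

lemma my_net_rip {E F : Type*} [NormedAddCommGroup E] [NormedSpace ℝ E]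
    [NormedAddCommGroup F] [NormedSpace ℝ F]
    (Φ : E →L[ℝ] F) (δ : ℝ) (hδ : 0 < δ) (hδ1 : δ ≤ 1)
    (Net : Finset E) (hcov : ∀ v : E, ‖v‖ = 1 → ∃ u ∈ Net, dist v u ≤ δ / 100)
    (hgood : ∀ u ∈ Net, |‖Φ u‖ ^ 2 - 1| ≤ 9 / 10 * δ) :
    ∀ v : E, ‖v‖ = 1 → |‖Φ v‖ ^ 2 - 1| ≤ δ := by
  have ha1 : (0:ℝ) ≤ 1 + 9 / 10 * δ := by linarith
  set a : ℝ := Real.sqrt (1 + 9 / 10 * δ) with hadef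
  have ha2 : a ^ 2 = 1 + 9 / 10 * δ := Real.sq_sqrt ha1
  have ha0 : 0 ≤ a := Real.sqrt_nonneg _
  have haN : ∀ u ∈ Net, ‖Φ u‖ ≤ a := by
    intro u hu
    have h := (abs_le.1 (hgood u hu)).2
    nlinarith [norm_nonneg (Φ u)]
  -- operator norm bound
  have hbound : ‖Φ‖ ≤ a + δ / 100 * ‖Φ‖ := by
    refine ContinuousLinearMap.opNorm_le_bound Φ
      (by positivity : (0:ℝ) ≤ a + δ / 100 * ‖Φ‖) (fun x => ?_)
    rcases eq_or_ne x 0 with rfl | hx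
    · simp
    · have hv : ‖‖x‖⁻¹ • x‖ = 1 := norm_smul_inv_norm hx
      obtain ⟨u, hu, hdist⟩ := hcov _ hv
      have h1 : ‖Φ (‖x‖⁻¹ • x)‖ ≤ ‖Φ u‖ + ‖Φ (‖x‖⁻¹ • x - u)‖ := by
        calc ‖Φ (‖x‖⁻¹ • x)‖ = ‖Φ u + (Φ (‖x‖⁻¹ • x) - Φ u)‖ := by rw [add_sub_cancel]
          _ ≤ ‖Φ u‖ + ‖Φ (‖x‖⁻¹ • x) - Φ u‖ := norm_add_le _ _
          _ = ‖Φ u‖ + ‖Φ (‖x‖⁻¹ • x - u)‖ := by rw [map_sub]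
      have h2 : ‖Φ (‖x‖⁻¹ • x - u)‖ ≤ ‖Φ‖ * (δ / 100) := by
        calc ‖Φ (‖x‖⁻¹ • x - u)‖ ≤ ‖Φ‖ * ‖‖x‖⁻¹ • x - u‖ := Φ.le_opNorm _
          _ ≤ ‖Φ‖ * (δ / 100) := by
              refine mul_le_mul_of_nonneg_left ?_ (norm_nonneg _)
              rw [← dist_eq_norm]; exact hdist
      have hΦv : ‖Φ (‖x‖⁻¹ • x)‖ ≤ a + δ / 100 * ‖Φ‖ := by
        have := haN u hu
        rw [mul_comm (δ / 100)]
        linarith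
      have hΦx : ‖Φ x‖ = ‖x‖ * ‖Φ (‖x‖⁻¹ • x)‖ := by
        rw [Φ.map_smul, norm_smul, norm_inv, norm_norm, ← mul_assoc,
          mul_inv_cancel₀ (norm_ne_zero_iff.2 hx), one_mul]
      rw [hΦx, mul_comm]
      exact mul_le_mul_of_nonneg_right hΦv (norm_nonneg _)
  have hM0 : (0:ℝ) ≤ ‖Φ‖ := norm_nonneg _
  have hMa : ‖Φ‖ * (1 - δ / 100) ≤ a := by nlinarith
  -- conclusion
  intro v hv
  obtain ⟨u, hu, hdist⟩ := hcov v hv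
  have hgu := abs_le.1 (hgood u hu)
  have hxup : ‖Φ v‖ ≤ ‖Φ‖ := by
    have := Φ.le_opNorm v; rw [hv, mul_one] at this; exact this
  have hΦvu : ‖Φ (u - v)‖ ≤ ‖Φ‖ * (δ / 100) := by
    calc ‖Φ (u - v)‖ ≤ ‖Φ‖ * ‖u - v‖ := Φ.le_opNorm _
      _ ≤ ‖Φ‖ * (δ / 100) := by
          refine mul_le_mul_of_nonneg_left ?_ hM0
          rw [← dist_eq_norm, dist_comm]; exact hdist
  have hlow : ‖Φ u‖ - ‖Φ‖ * (δ / 100) ≤ ‖Φ v‖ := by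
    have h1 : ‖Φ u‖ ≤ ‖Φ v‖ + ‖Φ (u - v)‖ := by
      calc ‖Φ u‖ = ‖Φ v + (Φ u - Φ v)‖ := by rw [add_sub_cancel]
        _ ≤ ‖Φ v‖ + ‖Φ u - Φ v‖ := norm_add_le _ _
        _ = ‖Φ v‖ + ‖Φ (u - v)‖ := by rw [map_sub]
    linarith
  have := my_rip_arith δ a (‖Φ v‖) (‖Φ u‖) (‖Φ‖) hδ hδ1 ha0 ha2
    (norm_nonneg _) (norm_nonneg _) hM0 hMa hxup hlow
    (by linarith [hgu.1]) (by linarith [hgu.2])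
  rw [abs_le]
  exact ⟨by linarith [this.1], by linarith [this.2]⟩

lemma my_BB_int {Y : Type} [MeasurableSpace Y] (ρ : Measure Y)
    (B : ℕ → Y → ℝ) (hBmeas : ∀ j, Measurable (B j))
    (horto : ∀ i j, ∫ y, B i y * B j y ∂ρ = if i = j then 1 else 0) :
    ∀ i j, Integrable (fun y => B i y * B j y) ρ := by
  have hB2 : ∀ j, Integrable (fun y => B j y * B j y) ρ := by
    intro j
    by_contra h
    have := horto j j
    rw [integral_undef h] at this
    simp at this
  intro i j
  refine Integrable.mono' (((hB2 i).const_mul (1/2)).add ((hB2 j).const_mul (1/2)))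
    ((hBmeas i).mul (hBmeas j)).aestronglyMeasurable (ae_of_all _ (fun y => ?_))
  rw [Real.norm_eq_abs, abs_mul]
  simp only [Pi.add_apply]
  nlinarith [sq_nonneg (|B i y| - |B j y|), sq_abs (B i y), sq_abs (B j y),
    abs_nonneg (B i y), abs_nonneg (B j y)]

lemma my_integral_sq_sum {Y : Type} [MeasurableSpace Y] (ρ : Measure Y)
    (B : ℕ → Y → ℝ) (hBmeas : ∀ j, Measurable (B j))
    (horto : ∀ i j, ∫ y, B i y * B j y ∂ρ = if i = j then 1 else 0)
    (T : Finset ℕ) (d : ℕ → ℝ) :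
    ∫ y, (∑ j ∈ T, d j * B j y) ^ 2 ∂ρ = ∑ j ∈ T, d j ^ 2 := by
  classical
  have hBB := my_BB_int ρ B hBmeas horto
  have hexp : ∀ y, (∑ j ∈ T, d j * B j y) ^ 2
      = ∑ j ∈ T, ∑ k ∈ T, (d j * d k) * (B j y * B k y) := by
    intro y
    rw [sq, Finset.sum_mul_sum]
    exact Finset.sum_congr rfl fun j _ => Finset.sum_congr rfl fun k _ => by ring
  calc ∫ y, (∑ j ∈ T, d j * B j y) ^ 2 ∂ρ
      = ∫ y, ∑ j ∈ T, ∑ k ∈ T, (d j * d k) * (B j y * B k y) ∂ρ := by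
        exact integral_congr_ae (ae_of_all _ hexp)
    _ = ∑ j ∈ T, ∑ k ∈ T, (d j * d k) * ∫ y, B j y * B k y ∂ρ := by
        rw [integral_finset_sum _ (fun j _ =>
          integrable_finset_sum _ (fun k _ => (hBB j k).const_mul _))]
        exact Finset.sum_congr rfl fun j _ => by
          rw [integral_finset_sum _ (fun k _ => (hBB j k).const_mul _)]
          exact Finset.sum_congr rfl fun k _ => integral_const_mul _ _
    _ = ∑ j ∈ T, d j ^ 2 := by
        refine Finset.sum_congr rfl fun j hj => ?_
        rw [Finset.sum_eq_single j]
        · rw [horto j j, if_pos rfl]; ring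
        · intro k _ hkj; rw [horto j k, if_neg (fun h => hkj h.symm)]; ring
        · intro hj'; exact absurd hj hj'

/-- The empirical linear map and its norm identity. -/
lemma my_emp_clm {Y : Type} (T : Finset ℕ) (B : ℕ → Y → ℝ) (w : Y → ℝ)
    (hw : ∀ y, 0 < w y) (n : ℕ) (hn : 0 < (n:ℝ)) (ys : Fin n → Y) :
    ∃ Φ : EuclideanSpace ℝ ↥T →L[ℝ] EuclideanSpace ℝ (Fin n),
      ∀ dv : EuclideanSpace ℝ ↥T, ‖Φ dv‖ ^ 2
        = (n:ℝ)⁻¹ * ∑ i, w (ys i) * (∑ j ∈ T.attach, dv j * B (↑j) (ys i)) ^ 2 := by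
  classical
  refine ⟨LinearMap.toContinuousLinearMap
    { toFun := fun dv => WithLp.toLp 2 (fun i => Real.sqrt (w (ys i) / n) *
        ∑ j ∈ T.attach, dv j * B (↑j) (ys i) : Fin n → ℝ)
      map_add' := fun d1 d2 => by
        ext i
        show Real.sqrt (w (ys i) / n) * ∑ j ∈ T.attach, (d1 + d2) j * B (↑j) (ys i)
          = Real.sqrt (w (ys i) / n) * (∑ j ∈ T.attach, d1 j * B (↑j) (ys i))
          + Real.sqrt (w (ys i) / n) * (∑ j ∈ T.attach, d2 j * B (↑j) (ys i))
        rw [← mul_add, ← Finset.sum_add_distrib]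
        congr 1
        refine Finset.sum_congr rfl fun j _ => ?_
        have h : (d1 + d2) j = d1 j + d2 j := rfl
        rw [h]
        ring
      map_smul' := fun a d1 => by
        ext i
        show Real.sqrt (w (ys i) / n) * ∑ j ∈ T.attach, (a • d1) j * B (↑j) (ys i)
          = a * (Real.sqrt (w (ys i) / n) * ∑ j ∈ T.attach, d1 j * B (↑j) (ys i))
        have hsum : ∑ j ∈ T.attach, (a • d1) j * B (↑j) (ys i)
            = a * ∑ j ∈ T.attach, d1 j * B (↑j) (ys i) := by
          rw [Finset.mul_sum]
          refine Finset.sum_congr rfl fun j _ => ?_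
          have h : (a • d1) j = a * d1 j := rfl
          rw [h]
          ring
        rw [hsum]
        ring }, ?_⟩
  intro dv
  rw [EuclideanSpace.norm_eq, Real.sq_sqrt (Finset.sum_nonneg fun i _ => sq_nonneg _),
    Finset.mul_sum]
  refine Finset.sum_congr rfl fun i _ => ?_
  show ‖Real.sqrt (w (ys i) / n) * ∑ j ∈ T.attach, dv j * B (↑j) (ys i)‖ ^ 2 = _
  rw [Real.norm_eq_abs, sq_abs, mul_pow, Real.sq_sqrt (div_nonneg (hw _).le hn.le)]
  field_simp

set_option maxHeartbeats 1000000 in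
/-- (Theorem 4.8: RIP for weighted-sparse sets.) There are universal
constants `C₁, C₂ > 0` such that for i.i.d. samples drawn from `μ = w⁻¹·ρ`, the
probability that RIP(M_{ω,s} ∩ V_m, δ) fails is at most
`C₁ (C₂ m/δ)^s exp(−(n/2)(δ/s)²)`. -/
theorem weighted_sparse_rip :
    ∃ C₁ C₂ : ℝ, 0 < C₁ ∧ 0 < C₂ ∧
      ∀ (Y : Type) [MeasurableSpace Y] (ρ : Measure Y) [IsProbabilityMeasure ρ]
        (B : ℕ → Y → ℝ), (∀ j, Measurable (B j)) →
        (∀ i j, ∫ y, B i y * B j y ∂ρ = if i = j then 1 else 0) →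
        ∀ w : Y → ℝ, Measurable w → (∀ y, 0 < w y) → (∫ y, (w y)⁻¹ ∂ρ = 1) →
        ∀ (μ : Measure Y) [IsProbabilityMeasure μ],
          μ = ρ.withDensity (fun y => ENNReal.ofReal (w y)⁻¹) →
        ∀ ω : ℕ → ℝ, (∀ j, 0 ≤ ω j) →
        (∀ j, essSup (fun y => ENNReal.ofReal (w y * B j y ^ 2)) ρ ≤
          ENNReal.ofReal (ω j ^ 2)) →
        ∀ (S : Finset ℕ) (m : ℕ), S.card = m →
        ∀ s : ℝ, 1 ≤ s → s ≤ (m : ℝ) →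
        ∀ δ : ℝ, 0 < δ → δ ≤ 1 →
        ∀ n : ℕ, 0 < n →
          Measure.pi (fun _ : Fin n => μ)
            {ys : Fin n → Y | ¬ ∀ c : ℕ → ℝ, (∀ j ∉ S, c j = 0) →
              (∑ j ∈ S.filter (fun j => c j ≠ 0), ω j ^ 2 ≤ s) →
              ((1 - δ) * ∫ y, (∑ j ∈ S, c j * B j y) ^ 2 ∂ρ ≤
                  (n : ℝ)⁻¹ * ∑ i, w (ys i) * (∑ j ∈ S, c j * B j (ys i)) ^ 2 ∧
                (n : ℝ)⁻¹ * ∑ i, w (ys i) * (∑ j ∈ S, c j * B j (ys i)) ^ 2 ≤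
                  (1 + δ) * ∫ y, (∑ j ∈ S, c j * B j y) ^ 2 ∂ρ)} ≤
            ENNReal.ofReal
              (C₁ * (C₂ * m / δ) ^ s * Real.exp (-((n : ℝ) / 2) * (δ / s) ^ 2)) := by
  refine ⟨2, 402, by norm_num, by norm_num, ?_⟩
  intro Y _iY ρ _iρ B hBmeas horto w hwmeas hwpos hwint μ _iμ hμ ω hω0 hωB S m hSm s hs1 hsm
    δ hδ0 hδ1 n hn
  classical
  subst hSm
  have hs0 : (0:ℝ) < s := lt_of_lt_of_le one_pos hs1
  have hn0 : (0:ℝ) < n := Nat.cast_pos.2 hn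
  have hm1 : (1:ℝ) ≤ (S.card : ℝ) := hs1.trans hsm
  have hac : μ ≪ ρ := by rw [hμ]; exact withDensity_absolutelyContinuous ρ _
  have hBB := my_BB_int ρ B hBmeas horto
  have hwb : ∀ j, ∀ᵐ y ∂ρ, w y * B j y ^ 2 ≤ ω j ^ 2 := by
    intro j
    filter_upwards [ae_le_essSup (fun y => ENNReal.ofReal (w y * B j y ^ 2))] with y hy
    exact (ENNReal.ofReal_le_ofReal_iff (sq_nonneg _)).1 (le_trans hy (hωB j))
  have hwinv_int : Integrable (fun y => (w y)⁻¹) ρ := by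
    by_contra h
    rw [integral_undef h] at hwint
    exact one_ne_zero hwint.symm
  have hω1 : ∀ j, (1:ℝ) ≤ ω j ^ 2 := by
    intro j
    have h1 : (∫ y, B j y * B j y ∂ρ) = 1 := by simpa using horto j j
    have hle : ∀ᵐ y ∂ρ, B j y * B j y ≤ ω j ^ 2 * (w y)⁻¹ := by
      filter_upwards [hwb j] with y hy
      have hwy := hwpos y
      rw [← sq, ← div_eq_mul_inv, le_div_iff₀ hwy, mul_comm]
      exact hy
    calc (1:ℝ) = ∫ y, B j y * B j y ∂ρ := h1.symm
      _ ≤ ∫ y, ω j ^ 2 * (w y)⁻¹ ∂ρ := integral_mono_ae (hBB j j) (hwinv_int.const_mul _) hle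
      _ = ω j ^ 2 := by rw [integral_const_mul, hwint, mul_one]
  have hmeanw : ∀ g : Y → ℝ, Measurable g → (∫ y, w y * g y ∂μ) = ∫ y, g y ∂ρ := by
    intro g hg
    rw [hμ]
    have hf : Measurable (fun y => Real.toNNReal (w y)⁻¹) := hwmeas.inv.real_toNNReal
    rw [show (fun y => ENNReal.ofReal (w y)⁻¹)
        = (fun y => ((Real.toNNReal (w y)⁻¹ : ℝ≥0) : ℝ≥0∞)) from rfl]
    rw [integral_withDensity_eq_integral_smul hf]
    refine integral_congr_ae (ae_of_all _ (fun y => ?_))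
    have hwy := hwpos y
    show (w y)⁻¹.toNNReal • (w y * g y) = g y
    rw [NNReal.smul_def, Real.coe_toNNReal _ (inv_nonneg.2 hwy.le), smul_eq_mul]
    field_simp
  set t : ℝ := 9 / 10 * δ with htdef
  have ht0 : 0 < t := by rw [htdef]; linarith
  have hts : t ≤ s := by rw [htdef]; nlinarith
  have hprob : ∀ T : Finset ℕ, (∑ j ∈ T, ω j ^ 2) ≤ s →
      ∀ u : EuclideanSpace ℝ ↥T, ‖u‖ = 1 →
      (Measure.pi (fun _ : Fin n => μ)
          {x : Fin n → Y | (n:ℝ) * t ≤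
            ∑ i, (w (x i) * (∑ j ∈ T.attach, u j * B (↑j) (x i)) ^ 2 - 1)} ≤
          ENNReal.ofReal (Real.exp (-(13/16) * n * (t/s)^2)) ∧
       Measure.pi (fun _ : Fin n => μ)
          {x : Fin n → Y | (n:ℝ) * t ≤
            ∑ i, (1 - w (x i) * (∑ j ∈ T.attach, u j * B (↑j) (x i)) ^ 2)} ≤
          ENNReal.ofReal (Real.exp (-(13/16) * n * (t/s)^2))) := by
    intro T hTs u hu
    have hvmeas : Measurable fun y => ∑ j ∈ T.attach, u j * B (↑j) y :=
      Finset.measurable_sum _ (fun j _ => (hBmeas _).const_mul _)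
    have hXmeas : Measurable fun y => w y * (∑ j ∈ T.attach, u j * B (↑j) y) ^ 2 :=
      hwmeas.mul (hvmeas.pow_const 2)
    have hu2 : ∑ j ∈ T.attach, (u j) ^ 2 = 1 := by
      have h := hu
      rw [EuclideanSpace.norm_eq, Real.sqrt_eq_one] at h
      rw [← h, ← Finset.univ_eq_attach]
      exact Finset.sum_congr rfl fun j _ => by rw [Real.norm_eq_abs, sq_abs]
    have hXb : ∀ᵐ y ∂ρ, w y * (∑ j ∈ T.attach, u j * B (↑j) y) ^ 2 ≤ s := by
      have hall : ∀ᵐ y ∂ρ, ∀ j : ↥T, w y * B (↑j) y ^ 2 ≤ ω ↑j ^ 2 :=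
        ae_all_iff.2 (fun j => hwb ↑j)
      filter_upwards [hall] with y hy
      have hwy := (hwpos y).le
      have hCS : (∑ j ∈ T.attach, u j * B (↑j) y) ^ 2 ≤
          (∑ j ∈ T.attach, u j ^ 2) * ∑ j ∈ T.attach, B (↑j) y ^ 2 :=
        Finset.sum_mul_sq_le_sq_mul_sq _ _ _
      calc w y * (∑ j ∈ T.attach, u j * B (↑j) y) ^ 2
          ≤ w y * ((∑ j ∈ T.attach, u j ^ 2) * ∑ j ∈ T.attach, B (↑j) y ^ 2) :=
            mul_le_mul_of_nonneg_left hCS hwy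
        _ = ∑ j ∈ T.attach, w y * B (↑j) y ^ 2 := by rw [hu2, one_mul, Finset.mul_sum]
        _ ≤ ∑ j ∈ T.attach, ω (↑j) ^ 2 := Finset.sum_le_sum (fun j _ => hy j)
        _ = ∑ j ∈ T, ω j ^ 2 := Finset.sum_attach T (fun k => ω k ^ 2)
        _ ≤ s := hTs
    have hXbμ : ∀ᵐ y ∂μ, w y * (∑ j ∈ T.attach, u j * B (↑j) y) ^ 2 ≤ s := hac.ae_le hXb
    have hEX : (∫ y, w y * (∑ j ∈ T.attach, u j * B (↑j) y) ^ 2 ∂μ) = 1 := by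
      rw [hmeanw _ (hvmeas.pow_const 2)]
      set d : ℕ → ℝ := fun k => if hk : k ∈ T then u ⟨k, hk⟩ else 0 with hddef
      have hd : ∀ y, ∑ j ∈ T.attach, u j * B (↑j) y = ∑ j ∈ T, d j * B j y := by
        intro y
        rw [← Finset.sum_attach T (fun k => d k * B k y)]
        refine Finset.sum_congr rfl fun j _ => ?_
        simp only [hddef]
        rw [dif_pos j.2]
      have hd2 : ∑ j ∈ T.attach, u j ^ 2 = ∑ j ∈ T, d j ^ 2 := by
        rw [← Finset.sum_attach T (fun k => d k ^ 2)]
        refine Finset.sum_congr rfl fun j _ => ?_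
        simp only [hddef]
        rw [dif_pos j.2]
      calc (∫ y, (∑ j ∈ T.attach, u j * B (↑j) y) ^ 2 ∂ρ)
          = ∫ y, (∑ j ∈ T, d j * B j y) ^ 2 ∂ρ := by simp_rw [hd]
        _ = ∑ j ∈ T, d j ^ 2 := my_integral_sq_sum ρ B hBmeas horto T d
        _ = 1 := by rw [← hd2, hu2]
    have hXint : Integrable (fun y => w y * (∑ j ∈ T.attach, u j * B (↑j) y) ^ 2) μ := by
      refine Integrable.mono' (integrable_const s) hXmeas.aestronglyMeasurable ?_
      filter_upwards [hXbμ] with y hy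
      rw [Real.norm_eq_abs, abs_of_nonneg (mul_nonneg (hwpos y).le (sq_nonneg _))]
      exact hy
    have hX2int : Integrable
        (fun y => (w y * (∑ j ∈ T.attach, u j * B (↑j) y) ^ 2) ^ 2) μ := by
      refine Integrable.mono' (integrable_const (s ^ 2))
        (hXmeas.pow_const 2).aestronglyMeasurable ?_
      filter_upwards [hXbμ] with y hy
      rw [Real.norm_eq_abs, abs_of_nonneg (sq_nonneg _)]
      have h0 : (0:ℝ) ≤ w y * (∑ j ∈ T.attach, u j * B (↑j) y) ^ 2 := mul_nonneg (hwpos y).le (sq_nonneg _)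
      nlinarith
    have hEX2 : (∫ y, (w y * (∑ j ∈ T.attach, u j * B (↑j) y) ^ 2) ^ 2 ∂μ) ≤ s := by
      have hmono : ∀ᵐ y ∂μ, (w y * (∑ j ∈ T.attach, u j * B (↑j) y) ^ 2) ^ 2 ≤
          s * (w y * (∑ j ∈ T.attach, u j * B (↑j) y) ^ 2) := by
        filter_upwards [hXbμ] with y hy
        have h0 : (0:ℝ) ≤ w y * (∑ j ∈ T.attach, u j * B (↑j) y) ^ 2 := mul_nonneg (hwpos y).le (sq_nonneg _)
        nlinarith
      calc (∫ y, (w y * (∑ j ∈ T.attach, u j * B (↑j) y) ^ 2) ^ 2 ∂μ)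
          ≤ ∫ y, s * (w y * (∑ j ∈ T.attach, u j * B (↑j) y) ^ 2) ∂μ :=
            integral_mono_ae hX2int (hXint.const_mul s) hmono
        _ = s := by rw [integral_const_mul, hEX, mul_one]
    have hbdZ : ∀ᵐ y ∂μ, |w y * (∑ j ∈ T.attach, u j * B (↑j) y) ^ 2 - 1| ≤ s := by
      filter_upwards [hXbμ] with y hy
      have h0 : (0:ℝ) ≤ w y * (∑ j ∈ T.attach, u j * B (↑j) y) ^ 2 := mul_nonneg (hwpos y).le (sq_nonneg _)
      rw [abs_le]
      constructor <;> nlinarith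
    have hvarZ : (∫ y, (w y * (∑ j ∈ T.attach, u j * B (↑j) y) ^ 2 - 1) ^ 2 ∂μ)
        ≤ s ^ 2 / 4 := by
      have he : (fun y => (w y * (∑ j ∈ T.attach, u j * B (↑j) y) ^ 2 - 1) ^ 2)
          = fun y => ((w y * (∑ j ∈ T.attach, u j * B (↑j) y) ^ 2) ^ 2
              - 2 * (w y * (∑ j ∈ T.attach, u j * B (↑j) y) ^ 2)) + 1 := by
        funext y; ring
      have h12 : Integrable (fun y => (w y * (∑ j ∈ T.attach, u j * B (↑j) y) ^ 2) ^ 2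
          - 2 * (w y * (∑ j ∈ T.attach, u j * B (↑j) y) ^ 2)) μ :=
        hX2int.sub (hXint.const_mul 2)
      rw [he, integral_add h12 (integrable_const 1),
        integral_sub hX2int (hXint.const_mul 2), integral_const_mul, hEX, integral_const]
      simp only [measure_univ, ENNReal.toReal_one, probReal_univ, smul_eq_mul, mul_one]
      nlinarith [sq_nonneg (s - 2)]
    constructor
    · have happ := my_chernoff_tail μ
        (fun y => w y * (∑ j ∈ T.attach, u j * B (↑j) y) ^ 2 - 1)
        (hXmeas.sub measurable_const) s t hs0 hbdZ
        (by rw [integral_sub hXint (integrable_const 1), hEX, integral_const]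
            simp) hvarZ ht0 hts n
      exact happ
    · have habs : ∀ᵐ y ∂μ, |1 - w y * (∑ j ∈ T.attach, u j * B (↑j) y) ^ 2| ≤ s := by
        filter_upwards [hbdZ] with y hy
        rwa [abs_sub_comm]
      have hvar2 : (∫ y, (1 - w y * (∑ j ∈ T.attach, u j * B (↑j) y) ^ 2) ^ 2 ∂μ)
          ≤ s ^ 2 / 4 := by
        have he : (fun y => (1 - w y * (∑ j ∈ T.attach, u j * B (↑j) y) ^ 2) ^ 2)
            = fun y => (w y * (∑ j ∈ T.attach, u j * B (↑j) y) ^ 2 - 1) ^ 2 := by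
          funext y; ring
        rw [he]; exact hvarZ
      have happ := my_chernoff_tail μ
        (fun y => 1 - w y * (∑ j ∈ T.attach, u j * B (↑j) y) ^ 2)
        (measurable_const.sub hXmeas) s t hs0 habs
        (by rw [integral_sub (integrable_const 1) hXint, hEX, integral_const]
            simp) hvar2 ht0 hts n
      exact happ
  -- nets
  have hNet : ∀ T : Finset ℕ, ∃ Net : Finset (EuclideanSpace ℝ ↥T),
      (∀ u ∈ Net, ‖u‖ = 1) ∧
      (∀ v : EuclideanSpace ℝ ↥T, ‖v‖ = 1 → ∃ u ∈ Net, dist v u ≤ δ / 100) ∧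
      ((Net.card : ℝ) ≤ (1 + 2 / (δ / 100)) ^ T.card) := by
    intro T
    rcases T.eq_empty_or_nonempty with rfl | hT
    · refine ⟨∅, by simp, ?_, by simp⟩
      intro v hv
      exfalso
      haveI : IsEmpty (↥(∅ : Finset ℕ)) := by
        constructor; rintro ⟨j, hj⟩; exact absurd hj (Finset.notMem_empty j)
      have hv0 : v = 0 := Subsingleton.elim v 0
      rw [hv0, norm_zero] at hv
      exact zero_ne_one hv
    · haveI : Nonempty (↥T) := ⟨⟨hT.choose, hT.choose_spec⟩⟩
      obtain ⟨Net, h1, h2, h3⟩ := my_sphere_net (↥T) (δ / 100) (by positivity)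
      exact ⟨Net, h1, h2, by rwa [Fintype.card_coe] at h3⟩
  choose Net hNet1 hNet2 hNet3 using hNet
  have hkT' : ∀ T : Finset ℕ, (∑ j ∈ T, ω j ^ 2) ≤ s → (T.card : ℝ) ≤ s := by
    intro T hTsum
    calc (T.card : ℝ) = ∑ j ∈ T, (1:ℝ) := by rw [Finset.sum_const, nsmul_eq_mul, mul_one]
      _ ≤ ∑ j ∈ T, ω j ^ 2 := Finset.sum_le_sum (fun j _ => hω1 j)
      _ ≤ s := hTsum
  set 𝒯 : Finset (Finset ℕ) :=
    S.powerset.filter (fun T => T.Nonempty ∧ ∑ j ∈ T, ω j ^ 2 ≤ s) with hTTdef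
  set Ap : (T : Finset ℕ) → EuclideanSpace ℝ ↥T → Set (Fin n → Y) := fun T u =>
    {x : Fin n → Y | (n:ℝ) * t ≤
      ∑ i, (w (x i) * (∑ j ∈ T.attach, u j * B (↑j) (x i)) ^ 2 - 1)} with hApdef
  set Am : (T : Finset ℕ) → EuclideanSpace ℝ ↥T → Set (Fin n → Y) := fun T u =>
    {x : Fin n → Y | (n:ℝ) * t ≤
      ∑ i, (1 - w (x i) * (∑ j ∈ T.attach, u j * B (↑j) (x i)) ^ 2)} with hAmdef
  refine le_trans (measure_mono
    (?_ : _ ⊆ ⋃ T ∈ 𝒯, ⋃ u ∈ Net T, (Ap T u ∪ Am T u))) ?_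
  · -- inclusion
    intro ys hys
    simp only [Set.mem_setOf_eq] at hys
    by_contra hnot
    apply hys
    intro c hc0 hcs
    have hnotin : ∀ T ∈ 𝒯, ∀ u ∈ Net T, ys ∉ Ap T u ∧ ys ∉ Am T u := by
      intro T hT u hu
      constructor <;> intro hmem <;>
        exact hnot (Set.mem_iUnion₂.2 ⟨T, hT, Set.mem_iUnion₂.2
          ⟨u, hu, by first | exact Or.inl hmem | exact Or.inr hmem⟩⟩)
    by_cases hc : ∀ j ∈ S, c j = 0
    · have hzero : ∀ y, ∑ j ∈ S, c j * B j y = 0 := fun y =>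
        Finset.sum_eq_zero (fun j hj => by rw [hc j hj, zero_mul])
      refine ⟨?_, ?_⟩ <;> simp_rw [hzero] <;> simp
    · push_neg at hc
      set T := S.filter (fun j => c j ≠ 0) with hTdef2
      have hTS : T ⊆ S := Finset.filter_subset _ _
      have hcT : ∀ j ∈ S, j ∉ T → c j = 0 := by
        intro j hj hjT
        by_contra hne
        exact hjT (Finset.mem_filter.2 ⟨hj, hne⟩)
      have hTne : T.Nonempty := by
        obtain ⟨j, hjS, hjne⟩ := hc
        exact ⟨j, Finset.mem_filter.2 ⟨hjS, hjne⟩⟩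
      have hT𝒯 : T ∈ 𝒯 := Finset.mem_filter.2 ⟨Finset.mem_powerset.2 hTS, hTne, hcs⟩
      set r2 : ℝ := ∑ j ∈ T, c j ^ 2 with hr2def
      have hr2pos : 0 < r2 := by
        obtain ⟨j, hj⟩ := hTne
        have hcj : c j ≠ 0 := (Finset.mem_filter.1 hj).2
        have hpos : 0 < c j ^ 2 := by positivity
        exact lt_of_lt_of_le hpos (Finset.single_le_sum (fun k _ => sq_nonneg (c k)) hj)
      set r : ℝ := Real.sqrt r2 with hrdef
      have hr0 : 0 < r := Real.sqrt_pos.2 hr2pos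
      have hrsq : r ^ 2 = r2 := Real.sq_sqrt hr2pos.le
      have hsumTS : ∀ y, ∑ j ∈ S, c j * B j y = ∑ j ∈ T, c j * B j y := fun y =>
        (Finset.sum_subset hTS (fun j hj hjT => by rw [hcT j hj hjT, zero_mul])).symm
      have hintc : (∫ y, (∑ j ∈ S, c j * B j y) ^ 2 ∂ρ) = r ^ 2 := by
        rw [my_integral_sq_sum ρ B hBmeas horto S c, hrsq, hr2def]
        exact (Finset.sum_subset hTS (fun j hj hjT => by rw [hcT j hj hjT]; norm_num)).symm
      set chat : EuclideanSpace ℝ ↥T := WithLp.toLp 2 (fun j => c ↑j / r : ↥T → ℝ) with hchatdef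
      have hchat2 : ∑ j ∈ T.attach, chat j ^ 2 = 1 := by
        have : ∀ j ∈ T.attach, chat j ^ 2 = c ↑j ^ 2 / r2 := by
          intro j _
          simp only [hchatdef, PiLp.toLp_apply]
          rw [div_pow, hrsq]
        rw [Finset.sum_congr rfl this, ← Finset.sum_div,
          Finset.sum_attach T (fun k => c k ^ 2), ← hr2def, div_self hr2pos.ne']
      have hchatnorm : ‖chat‖ = 1 := by
        rw [EuclideanSpace.norm_eq]
        have he : ∑ i, ‖chat i‖ ^ 2 = 1 := by
          rw [← hchat2, ← Finset.univ_eq_attach]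
          exact Finset.sum_congr rfl fun j _ => by rw [Real.norm_eq_abs, sq_abs]
        rw [he, Real.sqrt_one]
      obtain ⟨Φ, hΦnorm⟩ := my_emp_clm T B w hwpos n hn0 ys
      have hgood : ∀ u' ∈ Net T, |‖Φ u'‖ ^ 2 - 1| ≤ 9 / 10 * δ := by
        intro u' hu'
        obtain ⟨hp, hm⟩ := hnotin T hT𝒯 u' hu'
        simp only [hApdef, Set.mem_setOf_eq, not_le] at hp
        simp only [hAmdef, Set.mem_setOf_eq, not_le] at hm
        rw [Finset.sum_sub_distrib, Finset.sum_const, Finset.card_univ, Fintype.card_fin,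
          nsmul_eq_mul, mul_one] at hp
        rw [Finset.sum_sub_distrib, Finset.sum_const, Finset.card_univ, Fintype.card_fin,
          nsmul_eq_mul, mul_one] at hm
        rw [hΦnorm, abs_le]
        set A : ℝ := ∑ i, w (ys i) * (∑ j ∈ T.attach, u' j * B (↑j) (ys i)) ^ 2 with hAdef
        have hinv : (0:ℝ) < (n:ℝ)⁻¹ := inv_pos.2 hn0
        constructor
        · have h1 : ↑n - ↑n * t < A := by linarith
          have h2 := mul_lt_mul_of_pos_left h1 hinv
          have h3 : (n:ℝ)⁻¹ * (↑n - ↑n * t) = 1 - t := by field_simp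
          rw [h3, htdef] at h2
          linarith
        · have h1 : A < ↑n + ↑n * t := by linarith
          have h2 := mul_lt_mul_of_pos_left h1 hinv
          have h3 : (n:ℝ)⁻¹ * (↑n + ↑n * t) = 1 + t := by field_simp
          rw [h3, htdef] at h2
          linarith
      have hripc := my_net_rip Φ δ hδ0 hδ1 (Net T) (hNet2 T) hgood chat hchatnorm
      have hsumchat : ∀ y, ∑ j ∈ T.attach, chat j * B (↑j) y
          = r⁻¹ * ∑ j ∈ S, c j * B j y := by
        intro y
        rw [hsumTS y, ← Finset.sum_attach T (fun k => c k * B k y), Finset.mul_sum]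
        refine Finset.sum_congr rfl fun j _ => ?_
        simp only [hchatdef, PiLp.toLp_apply]
        ring
      have hQchat : ‖Φ chat‖ ^ 2 = (r ^ 2)⁻¹ *
          ((n:ℝ)⁻¹ * ∑ i, w (ys i) * (∑ j ∈ S, c j * B j (ys i)) ^ 2) := by
        rw [hΦnorm]
        have hterm : ∀ i : Fin n, w (ys i) *
            (∑ j ∈ T.attach, chat j * B (↑j) (ys i)) ^ 2
            = (r ^ 2)⁻¹ * (w (ys i) * (∑ j ∈ S, c j * B j (ys i)) ^ 2) := by
          intro i
          rw [hsumchat (ys i), mul_pow, inv_pow]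
          ring
        rw [Finset.sum_congr rfl (fun i _ => hterm i), ← Finset.mul_sum]
        ring
      obtain ⟨hrip1, hrip2⟩ := abs_le.1 hripc
      rw [hQchat] at hrip1 hrip2
      rw [hintc]
      have hr2 : (0:ℝ) < r ^ 2 := by positivity
      set W : ℝ := (n:ℝ)⁻¹ * ∑ i, w (ys i) * (∑ j ∈ S, c j * B j (ys i)) ^ 2 with hWdef
      have hWeq : r ^ 2 * ((r ^ 2)⁻¹ * W) = W := by field_simp
      constructor
      · have h := mul_le_mul_of_nonneg_left
          (by linarith : 1 - δ ≤ (r ^ 2)⁻¹ * W) hr2.le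
        rw [hWeq] at h
        calc (1 - δ) * r ^ 2 = r ^ 2 * (1 - δ) := mul_comm _ _
          _ ≤ W := h
      · have h := mul_le_mul_of_nonneg_left
          (by linarith : (r ^ 2)⁻¹ * W ≤ 1 + δ) hr2.le
        rw [hWeq] at h
        calc W ≤ r ^ 2 * (1 + δ) := h
          _ = (1 + δ) * r ^ 2 := mul_comm _ _
  · -- counting
    have hexpθ : (0:ℝ) < Real.exp (-((n:ℝ)/2) * (δ/s)^2) := Real.exp_pos _
    have hε : ENNReal.ofReal (Real.exp (-(13/16) * n * (t/s)^2)) ≤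
        ENNReal.ofReal (Real.exp (-((n:ℝ)/2) * (δ/s)^2)) := by
      apply ENNReal.ofReal_le_ofReal
      apply Real.exp_le_exp.2
      rw [htdef]
      have he : ((9/10*δ)/s)^2 = 81/100 * (δ/s)^2 := by ring
      rw [he]
      have hq : (0:ℝ) ≤ (n:ℝ) * (δ/s)^2 := mul_nonneg hn0.le (sq_nonneg _)
      nlinarith
    have h201 : (1:ℝ) ≤ 201/δ := by
      rw [le_div_iff₀ hδ0]
      linarith
    have hperT : ∀ T ∈ 𝒯, Measure.pi (fun _ : Fin n => μ) (⋃ u ∈ Net T, (Ap T u ∪ Am T u))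
        ≤ ENNReal.ofReal ((201/δ) ^ (s:ℝ) * (2 * Real.exp (-((n:ℝ)/2) * (δ/s)^2))) := by
      intro T hT
      have hmem := Finset.mem_filter.1 hT
      have hTsum : ∑ j ∈ T, ω j ^ 2 ≤ s := hmem.2.2
      have hkT : (T.card : ℝ) ≤ s := hkT' T hTsum
      have hNetcard : ((Net T).card : ℝ) ≤ (201/δ) ^ (s:ℝ) := by
        calc ((Net T).card : ℝ) ≤ (1 + 2/(δ/100)) ^ T.card := hNet3 T
          _ ≤ (201/δ) ^ T.card := by
              apply pow_le_pow_left₀ (by positivity)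
              have he : 2/(δ/100) = 200/δ := by
                rw [div_div_eq_mul_div]
                norm_num
              rw [he]
              have : (1:ℝ) ≤ 1/δ := by rw [le_div_iff₀ hδ0]; linarith
              have h2 : 200/δ + 1/δ = 201/δ := by ring
              linarith
          _ = (201/δ) ^ ((T.card : ℕ) : ℝ) := (Real.rpow_natCast _ _).symm
          _ ≤ (201/δ) ^ (s:ℝ) := Real.rpow_le_rpow_of_exponent_le h201 hkT
      calc Measure.pi (fun _ : Fin n => μ) (⋃ u ∈ Net T, (Ap T u ∪ Am T u))
          ≤ ∑ u ∈ Net T, Measure.pi (fun _ : Fin n => μ) (Ap T u ∪ Am T u) :=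
            measure_biUnion_finset_le _ _
        _ ≤ ∑ _u ∈ Net T, ENNReal.ofReal (2 * Real.exp (-((n:ℝ)/2) * (δ/s)^2)) := by
            refine Finset.sum_le_sum (fun u hu => ?_)
            obtain ⟨h1, h2⟩ := hprob T hTsum u (hNet1 T u hu)
            calc Measure.pi (fun _ : Fin n => μ) (Ap T u ∪ Am T u)
                ≤ Measure.pi (fun _ : Fin n => μ) (Ap T u)
                  + Measure.pi (fun _ : Fin n => μ) (Am T u) := measure_union_le _ _
              _ ≤ ENNReal.ofReal (Real.exp (-((n:ℝ)/2) * (δ/s)^2))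
                  + ENNReal.ofReal (Real.exp (-((n:ℝ)/2) * (δ/s)^2)) :=
                  add_le_add (le_trans h1 hε) (le_trans h2 hε)
              _ = ENNReal.ofReal (2 * Real.exp (-((n:ℝ)/2) * (δ/s)^2)) := by
                  rw [← ENNReal.ofReal_add hexpθ.le hexpθ.le]
                  congr 1
                  ring
        _ = ((Net T).card : ℝ≥0∞) * ENNReal.ofReal (2 * Real.exp (-((n:ℝ)/2) * (δ/s)^2)) := by
            rw [Finset.sum_const, nsmul_eq_mul]
        _ ≤ ENNReal.ofReal ((201/δ) ^ (s:ℝ))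
            * ENNReal.ofReal (2 * Real.exp (-((n:ℝ)/2) * (δ/s)^2)) := by
            refine mul_le_mul_left ?_ _
            rw [← ENNReal.ofReal_natCast]
            exact ENNReal.ofReal_le_ofReal hNetcard
        _ = ENNReal.ofReal ((201/δ) ^ (s:ℝ) * (2 * Real.exp (-((n:ℝ)/2) * (δ/s)^2))) :=
            (ENNReal.ofReal_mul (by positivity)).symm
    have hScard1 : 1 ≤ S.card := by exact_mod_cast hm1
    have hTcard : ((𝒯.card : ℝ)) ≤ (2 * S.card : ℝ) ^ (s:ℝ) := by
      set K := Nat.floor s with hKdef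
      have hsub : 𝒯 ⊆ (Finset.range (K+1)).biUnion (fun k => S.powersetCard k) := by
        intro T hT
        have hmem := Finset.mem_filter.1 hT
        have hTS := Finset.mem_powerset.1 hmem.1
        have hk : T.card ≤ K := Nat.le_floor (hkT' T hmem.2.2)
        exact Finset.mem_biUnion.2 ⟨T.card, Finset.mem_range.2 (by omega),
          Finset.mem_powersetCard.2 ⟨hTS, rfl⟩⟩
      have h1 : 𝒯.card ≤ ∑ k ∈ Finset.range (K+1), (S.powersetCard k).card :=
        le_trans (Finset.card_le_card hsub) (Finset.card_biUnion_le)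
      have h3 : 𝒯.card ≤ (K+1) * S.card ^ K := by
        refine le_trans h1 ?_
        calc ∑ k ∈ Finset.range (K+1), (S.powersetCard k).card
            ≤ ∑ k ∈ Finset.range (K+1), S.card ^ K := by
              refine Finset.sum_le_sum (fun k hk => ?_)
              rw [Finset.card_powersetCard]
              refine le_trans (Nat.choose_le_pow _ _) ?_
              exact Nat.pow_le_pow_right hScard1 (by
                have := Finset.mem_range.1 hk; omega)
          _ = (K+1) * S.card ^ K := by
              rw [Finset.sum_const, Finset.card_range, smul_eq_mul]
      have h4 : (K+1) * S.card ^ K ≤ (2 * S.card) ^ K := by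
        rw [mul_pow]
        refine Nat.mul_le_mul ?_ le_rfl
        have := Nat.lt_two_pow_self (n := K)
        omega
      have h5 : (𝒯.card : ℝ) ≤ ((2 * S.card) ^ K : ℕ) := by
        exact_mod_cast le_trans h3 h4
      refine le_trans h5 ?_
      have hc : (((2 * S.card) ^ K : ℕ) : ℝ) = ((2 * S.card : ℝ)) ^ (K : ℕ) := by
        push_cast
        ring
      rw [hc, ← Real.rpow_natCast (2 * S.card : ℝ) K]
      refine Real.rpow_le_rpow_of_exponent_le (by linarith) ?_
      exact Nat.floor_le hs0.le
    calc Measure.pi (fun _ : Fin n => μ) (⋃ T ∈ 𝒯, ⋃ u ∈ Net T, (Ap T u ∪ Am T u))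
        ≤ ∑ T ∈ 𝒯, Measure.pi (fun _ : Fin n => μ) (⋃ u ∈ Net T, (Ap T u ∪ Am T u)) :=
          measure_biUnion_finset_le _ _
      _ ≤ ∑ _T ∈ 𝒯, ENNReal.ofReal ((201/δ) ^ (s:ℝ)
            * (2 * Real.exp (-((n:ℝ)/2) * (δ/s)^2))) := Finset.sum_le_sum hperT
      _ = (𝒯.card : ℝ≥0∞) * ENNReal.ofReal ((201/δ) ^ (s:ℝ)
            * (2 * Real.exp (-((n:ℝ)/2) * (δ/s)^2))) := by
          rw [Finset.sum_const, nsmul_eq_mul]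
      _ ≤ ENNReal.ofReal ((2 * S.card : ℝ) ^ (s:ℝ)) * ENNReal.ofReal ((201/δ) ^ (s:ℝ)
            * (2 * Real.exp (-((n:ℝ)/2) * (δ/s)^2))) := by
          refine mul_le_mul_left ?_ _
          rw [← ENNReal.ofReal_natCast]
          exact ENNReal.ofReal_le_ofReal hTcard
      _ = ENNReal.ofReal (2 * (402 * S.card / δ) ^ (s:ℝ)
            * Real.exp (-((n:ℝ)/2) * (δ/s)^2)) := by
          rw [← ENNReal.ofReal_mul (by positivity)]
          congr 1
          rw [← mul_assoc, ← Real.mul_rpow (by positivity) (by positivity)]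
          rw [show (2 * (S.card:ℝ)) * (201/δ) = 402 * S.card / δ by ring]
          ring
end

section
/- Let m ∈ ℕ, ω ∈ (0,∞)^m, and s > 0. For v ∈ ℝ^m set ‖v‖_{ω,0} := Σ_{j ∈ supp(v)} ω_j² and M := {v ∈ ℝ^m : ‖v‖_{ω,0} ≤ s}. Then for every b ∈ ℝ^m and every v ∈ M with v ≠ 0, one has ⟨v, b⟩² / ‖v‖₂² ≤ s · max_{1≤j≤m} (b_j/ω_j)². In particular, the pointwise quantity b̂ := sup{⟨v, b⟩²/‖v‖₂² : v ∈ M, v ≠ 0} satisfies b̂ ≤ s ‖Ω^{-1} b‖_∞², where Ω := diag(ω). -/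
open scoped Classical

/-- (Lemma 4.11 / pointwise bound for weighted-sparse vectors.)
For `v` in the weighted-sparse model class `M = {v : ‖v‖_{ω,0} ≤ s}`,
`⟨v, b⟩²/‖v‖₂² ≤ s · max_j (b_j/ω_j)²`; in particular the pointwise supremum
`b̂ = sup_{v ∈ M, v ≠ 0} ⟨v,b⟩²/‖v‖₂²` satisfies `b̂ ≤ s ‖Ω⁻¹b‖_∞²`. -/
theorem weighted_sparse_pointwise_bound
    (m : ℕ) (ω : Fin m → ℝ) (hω : ∀ j, 0 < ω j)
    (s : ℝ) (hs : 0 < s) (b : Fin m → ℝ)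
    (v : Fin m → ℝ) (hv : v ≠ 0)
    (hv_sparse : ∑ j ∈ Finset.univ.filter (fun j => v j ≠ 0), ω j ^ 2 ≤ s) :
    (∑ j, v j * b j) ^ 2 / (∑ j, v j ^ 2) ≤ s * (⨆ j, (b j / ω j) ^ 2) := by
  -- m > 0 since v ≠ 0
  have hm : Nonempty (Fin m) := by
    rcases Nat.eq_zero_or_pos m with h | h
    · exact absurd (funext fun j => absurd h (Nat.ne_zero_of_lt j.2)) hv
    · exact ⟨⟨0, h⟩⟩
  set S := Finset.univ.filter (fun j : Fin m => v j ≠ 0) with hS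
  set T := ⨆ j, (b j / ω j) ^ 2 with hT
  have hTle : ∀ j, (b j / ω j) ^ 2 ≤ T :=
    fun j => le_ciSup (f := fun j => (b j / ω j) ^ 2) (Set.Finite.bddAbove (Set.finite_range _)) j
  have hT0 : 0 ≤ T := le_trans (sq_nonneg _) (hTle (Classical.arbitrary _))
  -- positivity of ∑ v j ^ 2
  obtain ⟨j0, hj0⟩ : ∃ j, v j ≠ 0 := by
    by_contra h; push_neg at h; exact hv (funext h)
  have hsum2 : 0 < ∑ j, v j ^ 2 :=
    Finset.sum_pos' (fun j _ => sq_nonneg _)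
      ⟨j0, Finset.mem_univ _, by positivity⟩
  rw [div_le_iff₀ hsum2]
  -- restrict sum to support
  have hrestrict : ∑ j, v j * b j = ∑ j ∈ S, ω j * (v j * b j / ω j) := by
    rw [← Finset.sum_filter_of_ne (p := fun j => v j ≠ 0)
      (by intro j _ hne hvj; simp [hvj] at hne)]
    exact Finset.sum_congr rfl fun j hj => by
      rw [mul_div_assoc', mul_comm (ω j), mul_div_assoc,
        div_self (hω j).ne', mul_one]
  rw [hrestrict]
  have CS := Finset.sum_mul_sq_le_sq_mul_sq S (fun j => ω j) (fun j => v j * b j / ω j)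
  refine le_trans CS ?_
  have h1 : ∑ j ∈ S, (ω j) ^ 2 ≤ s := hv_sparse
  have h2 : ∑ j ∈ S, (v j * b j / ω j) ^ 2 ≤ T * ∑ j, v j ^ 2 := by
    have : ∀ j ∈ S, (v j * b j / ω j) ^ 2 ≤ T * v j ^ 2 := by
      intro j _
      have : (v j * b j / ω j) ^ 2 = (b j / ω j) ^ 2 * v j ^ 2 := by ring
      rw [this]
      exact mul_le_mul_of_nonneg_right (hTle j) (sq_nonneg _)
    calc ∑ j ∈ S, (v j * b j / ω j) ^ 2 ≤ ∑ j ∈ S, T * v j ^ 2 := Finset.sum_le_sum this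
      _ ≤ ∑ j, T * v j ^ 2 := Finset.sum_le_sum_of_subset_of_nonneg (Finset.filter_subset _ _)
          (fun j _ _ => mul_nonneg hT0 (sq_nonneg _))
      _ = T * ∑ j, v j ^ 2 := by rw [Finset.mul_sum]
  calc (∑ j ∈ S, (ω j) ^ 2) * ∑ j ∈ S, (v j * b j / ω j) ^ 2
      ≤ s * (T * ∑ j, v j ^ 2) :=
        mul_le_mul h1 h2 (Finset.sum_nonneg fun j _ => sq_nonneg _) hs.le
    _ = s * T * ∑ j, v j ^ 2 := by ring
end

section
/- Let M, m ≥ 1 be integers and let V be the space of real tensors of order M and size m in each mode, i.e. functions v : ({1,…,m})^M → ℝ, equipped with the Frobenius inner product ⟨v, y⟩_F := Σ_{i ∈ ({1,…,m})^M} v_i y_i and Frobenius norm ‖·‖_F. Let T_1 := {v ∈ V : there exist u^{(1)},…,u^{(M)} ∈ ℝ^m with v_i = Π_{k=1}^M u^{(k)}_{i_k} for all i} be the set of elementary (rank-one) tensors. Let ρ be a probability measure on V such that ρ-almost every y lies in T_1, let w : V → (0,∞) be measurable with ∫ w^{-1} dρ = 1, and define the seminorms |v|_y := |⟨v, y⟩_F|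 and the norm ‖v‖ := (∫_V ⟨v, y⟩_F² dρ(y))^{1/2}; assume there is c > 0 with ‖v‖ = c ‖v‖_F for all v ∈ V. Then for every set A with T_1 ⊆ A ⊆ V one has K(U(A)) = K(U(V)), where U(A) := {v/‖v‖ : v ∈ A, v ≠ 0} and K(A') := sup_{v ∈ A'} esssup_{y ∈ V} w(y) ⟨v, y⟩_F². -/
open MeasureTheory ENNReal

/-- (Theorem 4.9: rank-one measurements of low-rank tensors.) If
`ρ`-almost every measurement tensor `y` has rank one and the norm induced by the
measurements is a multiple of the Frobenius norm, then every set `A` of tensors with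
`T₁ ⊆ A ⊆ V` has the same variation constant as the full tensor space:
`K(U(A)) = K(U(V))`. -/
theorem tensor_rank_one_variation_constant
    (M m : ℕ) (hM : 0 < M) (hm : 0 < m)
    (ρ : Measure ((Fin M → Fin m) → ℝ)) [IsProbabilityMeasure ρ]
    -- the set of elementary (rank-one) tensors
    (T1 : Set ((Fin M → Fin m) → ℝ))
    (hT1 : T1 = {v | ∃ u : Fin M → Fin m → ℝ, ∀ i, v i = ∏ k, u k (i k)})
    (hρ_rank1 : ∀ᵐ y ∂ρ, y ∈ T1)
    -- the weight function
    (w : ((Fin M → Fin m) → ℝ) → ℝ) (hw_meas : Measurable w) (hw_pos : ∀ y, 0 < w y)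
    (hw_int : ∫ y, (w y)⁻¹ ∂ρ = 1)
    -- the Frobenius inner product and the induced norm ‖v‖ = (∫ ⟨v,y⟩² dρ(y))^{1/2}
    (dot : ((Fin M → Fin m) → ℝ) → ((Fin M → Fin m) → ℝ) → ℝ)
    (hdot : ∀ v y, dot v y = ∑ i, v i * y i)
    (Nrm : ((Fin M → Fin m) → ℝ) → ℝ)
    (hNrm : ∀ v, Nrm v = Real.sqrt (∫ y, dot v y ^ 2 ∂ρ))
    -- ‖·‖ is a multiple of the Frobenius norm
    (c : ℝ) (hc : 0 < c)
    (hiso : ∀ v, Nrm v = c * Real.sqrt (∑ i, v i ^ 2))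
    -- the model class A with T₁ ⊆ A
    (A : Set ((Fin M → Fin m) → ℝ)) (hA : T1 ⊆ A)
    -- the variation constant K(·) (of a normalized set)
    (K : Set ((Fin M → Fin m) → ℝ) → ℝ≥0∞)
    (hK : ∀ A' : Set ((Fin M → Fin m) → ℝ),
      K A' = ⨆ v ∈ A', essSup (fun y => ENNReal.ofReal (w y * dot v y ^ 2)) ρ) :
    K {u | ∃ v ∈ A, v ≠ 0 ∧ u = (Nrm v)⁻¹ • v} =
      K {u | ∃ v : (Fin M → Fin m) → ℝ, v ≠ 0 ∧ u = (Nrm v)⁻¹ • v} := by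
  classical
  set f : ((Fin M → Fin m) → ℝ) → ((Fin M → Fin m) → ℝ) → ℝ≥0∞ :=
    fun v y => ENNReal.ofReal (w y * dot v y ^ 2) with hf
  set UA := {u : (Fin M → Fin m) → ℝ | ∃ v ∈ A, v ≠ 0 ∧ u = (Nrm v)⁻¹ • v} with hUA
  set UV := {u : (Fin M → Fin m) → ℝ | ∃ v : (Fin M → Fin m) → ℝ, v ≠ 0 ∧ u = (Nrm v)⁻¹ • v}
    with hUV
  have hsub : UA ⊆ UV := by rintro u ⟨v, _, hv0, rfl⟩; exact ⟨v, hv0, rfl⟩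
  have hsum_pos : ∀ v : (Fin M → Fin m) → ℝ, v ≠ 0 → 0 < ∑ i, v i ^ 2 := by
    intro v hv
    have : ∃ i, v i ≠ 0 := by
      by_contra h
      push_neg at h
      exact hv (funext fun i => h i)
    obtain ⟨i, hi⟩ := this
    exact Finset.sum_pos' (fun j _ => sq_nonneg _) ⟨i, Finset.mem_univ i, by positivity⟩
  have hNrm_pos : ∀ v : (Fin M → Fin m) → ℝ, v ≠ 0 → 0 < Nrm v := by
    intro v hv
    rw [hiso]
    exact mul_pos hc (Real.sqrt_pos.2 (hsum_pos v hv))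
  have hNrm_sq : ∀ v : (Fin M → Fin m) → ℝ, Nrm v ^ 2 = c ^ 2 * ∑ i, v i ^ 2 := by
    intro v
    rw [hiso, mul_pow, Real.sq_sqrt (Finset.sum_nonneg fun i _ => sq_nonneg _)]
  have hnorm_sum : ∀ v : (Fin M → Fin m) → ℝ, v ≠ 0 →
      ∑ i, ((Nrm v)⁻¹ • v) i ^ 2 = 1 / c ^ 2 := by
    intro v hv
    have hN := (hNrm_pos v hv).ne'
    have h1 : ∑ i, ((Nrm v)⁻¹ • v) i ^ 2 = (Nrm v ^ 2)⁻¹ * ∑ i, v i ^ 2 := by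
      rw [Finset.mul_sum]
      refine Finset.sum_congr rfl fun i _ => ?_
      simp [Pi.smul_apply, smul_eq_mul, mul_pow, inv_pow]
    have hs := (hsum_pos v hv).ne'
    rw [h1, hNrm_sq]
    field_simp
  have hdom : ∀ (u y : (Fin M → Fin m) → ℝ), (∑ i, u i ^ 2 = 1 / c ^ 2) →
      w y * dot u y ^ 2 ≤ w y * ((∑ i, y i ^ 2) / c ^ 2) := by
    intro u y hu
    have hcs := Finset.sum_mul_sq_le_sq_mul_sq Finset.univ u y
    rw [← hdot, hu] at hcs
    have : dot u y ^ 2 ≤ (∑ i, y i ^ 2) / c ^ 2 := by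
      calc dot u y ^ 2 ≤ 1 / c ^ 2 * ∑ i, y i ^ 2 := hcs
        _ = (∑ i, y i ^ 2) / c ^ 2 := by ring
    exact mul_le_mul_of_nonneg_left this (hw_pos y).le
  have hself : ∀ y : (Fin M → Fin m) → ℝ, y ≠ 0 →
      dot ((Nrm y)⁻¹ • y) y ^ 2 = (∑ i, y i ^ 2) / c ^ 2 := by
    intro y hy
    have hN := (hNrm_pos y hy).ne'
    have h1 : dot ((Nrm y)⁻¹ • y) y = (Nrm y)⁻¹ * ∑ i, y i ^ 2 := by
      rw [hdot, Finset.mul_sum]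
      refine Finset.sum_congr rfl fun i _ => ?_
      simp [Pi.smul_apply, smul_eq_mul, sq]
      ring
    have hs := (hsum_pos y hy).ne'
    rw [h1, mul_pow, inv_pow, hNrm_sq]
    field_simp
  set S := {u : (Fin M → Fin m) → ℝ | ∃ v ∈ T1, v ≠ 0 ∧ u = (Nrm v)⁻¹ • v} with hS
  have hSA : S ⊆ UA := by rintro u ⟨v, hvT, hv0, rfl⟩; exact ⟨v, hA hvT, hv0, rfl⟩
  obtain ⟨t, htc, htd⟩ := TopologicalSpace.exists_countable_dense (↥S)
  set D : Set ((Fin M → Fin m) → ℝ) := Subtype.val '' t with hD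
  have hDc : D.Countable := htc.image _
  have hDS : D ⊆ S := by rintro x ⟨⟨x, hx⟩, -, rfl⟩; exact hx
  have hScl : S ⊆ closure D := by
    intro x hx
    have h1 : (⟨x, hx⟩ : ↥S) ∈ closure t := by rw [htd.closure_eq]; trivial
    have h2 : x ∈ Subtype.val '' closure t := ⟨⟨x, hx⟩, h1, rfl⟩
    exact (image_closure_subset_closure_image continuous_subtype_val) h2
  have hDbound : ∀ d ∈ D, essSup (f d) ρ ≤ K UA := by
    intro d hd
    rw [hK UA]
    exact le_iSup₂ (f := fun v (_ : v ∈ UA) => essSup (f v) ρ) d (hSA (hDS hd))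
  have hae : ∀ᵐ y ∂ρ, ∀ d ∈ D, f d y ≤ K UA := by
    rw [ae_ball_iff hDc]
    intro d hd
    exact (ENNReal.ae_le_essSup (f d)).mono fun y hy => hy.trans (hDbound d hd)
  have hg : ∀ᵐ y ∂ρ, ENNReal.ofReal (w y * ((∑ i, y i ^ 2) / c ^ 2)) ≤ K UA := by
    filter_upwards [hae, hρ_rank1] with y hy hyT1
    by_cases hy0 : y = 0
    · simp [hy0]
    · have huyS : (Nrm y)⁻¹ • y ∈ S := ⟨y, hyT1, hy0, rfl⟩
      have hcont : Continuous fun u : (Fin M → Fin m) → ℝ => f u y := by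
        apply ENNReal.continuous_ofReal.comp
        apply Continuous.mul continuous_const
        apply Continuous.pow
        have hde : (fun u : (Fin M → Fin m) → ℝ => dot u y)
            = fun u : (Fin M → Fin m) → ℝ => ∑ i, u i * y i := by
          funext u; exact hdot u y
        rw [hde]
        exact continuous_finset_sum _ fun i _ => (continuous_apply i).mul continuous_const
      have hclosed : IsClosed {u : (Fin M → Fin m) → ℝ | f u y ≤ K UA} :=
        isClosed_le hcont continuous_const
      have hDin : D ⊆ {u : (Fin M → Fin m) → ℝ | f u y ≤ K UA} := fun d hd => hy d hd
      have hmem : (Nrm y)⁻¹ • y ∈ {u : (Fin M → Fin m) → ℝ | f u y ≤ K UA} :=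
        hclosed.closure_subset_iff.2 hDin (hScl huyS)
      have hval : f ((Nrm y)⁻¹ • y) y
          = ENNReal.ofReal (w y * ((∑ i, y i ^ 2) / c ^ 2)) := by
        simp only [hf]
        rw [hself y hy0]
      have hmem' : f ((Nrm y)⁻¹ • y) y ≤ K UA := hmem
      rwa [hval] at hmem'
  have hVA : K UV ≤ K UA := by
    rw [hK UV]
    apply iSup₂_le
    rintro u ⟨v, hv0, rfl⟩
    refine essSup_le_of_ae_le _ ?_
    filter_upwards [hg] with y hy
    refine le_trans ?_ hy
    exact ENNReal.ofReal_le_ofReal (hdom _ y (hnorm_sum v hv0))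
  have hAV : K UA ≤ K UV := by
    rw [hK UA, hK UV]
    apply iSup₂_le
    intro u hu
    exact le_iSup₂ (f := fun v (_ : v ∈ UV) => essSup (f v) ρ) u (hsub hu)
  exact le_antisymm hAV hVA
end
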